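/- arXiv:2102.01474 — 4 statements merged into one kernel-verified Lean document; each statement's English description precedes it below -/
import Mathlib

section
/- Let Φ, Φ̃ : ℂⁿ → ℝ be strictly plurisubharmonic quadratic forms with Φ̃ ≤ Φ pointwise, let κ♭ : ℂⁿ → ℂⁿ be an ℝ-linear isomorphism, let â ∈ ℂ, and let Ψ be a holomorphic quadratic form on ℂ^{2n} such that 2 Re Ψ(z, w̄) = Φ̃(z) + Φ(w) − R(z, w) for all z, w ∈ ℂⁿ, where R is a nonnegative quadratic form on ℂⁿ × ℂⁿ satisfying c|z − κ♭(w)|² ≤ R(z, w) ≤ C|z − κ♭(w)|² for some C, c > 0. Let u be an entire function with |u(w)| ≤ C₀⟨w⟩^{N} e^{Φ(w)} on ℂⁿ for some C₀ > 0, N ∈ ℝ, and set G u(z) = â ∫_{ℂⁿ} e^{2Ψ(z,w̄)} u(w) e^{-2Φ(w)} dL(w). If w₀ ∈ ℂⁿ∖{0} satisfies w₀ ∉ WF^{1/2}_Φ(u), then κ♭(w₀) ∉ WF^{1/2}_Φ(Gu); consequently WF^{1/2}_Φ(Gu) ⊆ κ♭(WF^{1/2}_Φ(u)). -/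
open Matrix MeasureTheory ENNReal

noncomputable section

/-- The squared Euclidean norm `|z|²` on `ℂⁿ`. -/
def eSq {n : ℕ} (z : Fin n → ℂ) : ℝ := ∑ i, Complex.normSq (z i)

/-- The Japanese bracket `⟨z⟩ = (1 + |z|²)^{1/2}`. -/
def jb {n : ℕ} (z : Fin n → ℂ) : ℝ := Real.sqrt (1 + eSq z)

/-- `Φ : ℂⁿ → ℝ` is a (real) quadratic form of the underlying real coordinates. -/
def IsRQuad {n : ℕ} (Φ : (Fin n → ℂ) → ℝ) : Prop :=
  ∃ B : (Fin n → ℂ) →ₗ[ℝ] (Fin n → ℂ) →ₗ[ℝ] ℝ, ∀ z, Φ z = B z z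

/-- `Φ : ℂⁿ → ℝ` is a strictly plurisubharmonic quadratic form.  For a quadratic form `Φ`,
the Levi form satisfies `(∂²_{z z̄}Φ) w ⋅ w̄ = (Φ(w) + Φ(i w))/2`, so positive definiteness of
the Levi matrix is equivalent to `Φ(w) + Φ(i·w) > 0` for all `w ≠ 0`. -/
def IsSPSH {n : ℕ} (Φ : (Fin n → ℂ) → ℝ) : Prop :=
  IsRQuad Φ ∧ ∀ z : Fin n → ℂ, z ≠ 0 → 0 < Φ z + Φ (Complex.I • z)

/-- The squared weighted norm `‖u‖_s² = ∫ |u(z)|² ⟨z⟩^{2s} e^{-2Φ(z)} L(dz)` (in `ℝ≥0∞`). -/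
def hnorm {n : ℕ} (Φ : (Fin n → ℂ) → ℝ) (s : ℝ) (u : (Fin n → ℂ) → ℂ) : ℝ≥0∞ :=
  ∫⁻ z : Fin n → ℂ, (‖u z‖₊ : ℝ≥0∞) ^ 2 * ENNReal.ofReal (jb z ^ (2 * s) * Real.exp (-2 * Φ z))

/-- A conic subset of `ℂⁿ`. -/
def IsConic {n : ℕ} (V : Set (Fin n → ℂ)) : Prop := ∀ z ∈ V, ∀ t : ℝ, 0 < t → t • z ∈ V

/-- The `1/2`-Gelfand–Shilov wavefront set of `u` relative to `Φ`: the complement in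
`ℂⁿ∖{0}` of the points having an open conic neighborhood in `ℂⁿ∖{0}` on which
`|u(z)| ≤ C e^{Φ(z) - c|z|²}`. -/
def wf {n : ℕ} (Φ : (Fin n → ℂ) → ℝ) (u : (Fin n → ℂ) → ℂ) : Set (Fin n → ℂ) :=
  {z₀ | z₀ ≠ 0 ∧ ¬ ∃ V : Set (Fin n → ℂ), IsOpen V ∧ IsConic V ∧ (0 : Fin n → ℂ) ∉ V ∧ z₀ ∈ V ∧
      ∃ C c : ℝ, 0 < C ∧ 0 < c ∧ ∀ z ∈ V, ‖u z‖ ≤ C * Real.exp (Φ z - c * eSq z)}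

/-- A holomorphic quadratic form on `ℂ^{2n} = ℂⁿ_z × ℂⁿ_θ`. -/
def IsCQuad2 {n : ℕ} (Ψ : (Fin n → ℂ) → (Fin n → ℂ) → ℂ) : Prop :=
  ∃ B : ((Fin n → ℂ) × (Fin n → ℂ)) →ₗ[ℂ] ((Fin n → ℂ) × (Fin n → ℂ)) →ₗ[ℂ] ℂ,
    ∀ z θ, Ψ z θ = B (z, θ) (z, θ)

/-- A real quadratic form on `ℂⁿ × ℂⁿ` viewed as a real vector space. -/
def IsRQuadPair {n : ℕ} (R : (Fin n → ℂ) → (Fin n → ℂ) → ℝ) : Prop :=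
  ∃ B : ((Fin n → ℂ) × (Fin n → ℂ)) →ₗ[ℝ] ((Fin n → ℂ) × (Fin n → ℂ)) →ₗ[ℝ] ℝ,
    ∀ z w, R z w = B (z, w) (z, w)

/-- The Bergman-form integral operator
`G u (z) = a ∫ e^{2Ψ(z, w̄)} u(w) e^{-2Φ(w)} L(dw)`. -/
def berg {n : ℕ} (a : ℂ) (Ψ : (Fin n → ℂ) → (Fin n → ℂ) → ℂ) (Φ : (Fin n → ℂ) → ℝ)
    (u : (Fin n → ℂ) → ℂ) (z : Fin n → ℂ) : ℂ :=
  a * ∫ w : Fin n → ℂ, Complex.exp (2 * Ψ z (star w)) * u w * (Real.exp (-2 * Φ w) : ℂ)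


namespace Stmt10Aux

open Complex

variable {n : ℕ}

/-- `ℂⁿ` with the Euclidean (`L²`) norm. -/
abbrev Eu (n : ℕ) := EuclideanSpace ℂ (Fin n)

/-- The identity map into the Euclidean structure. -/
def toE {n : ℕ} (z : Fin n → ℂ) : Eu n := WithLp.toLp 2 z

lemma toE_sub (z w : Fin n → ℂ) : toE (z - w) = toE z - toE w := rfl
lemma toE_smul (t : ℝ) (z : Fin n → ℂ) : toE (t • z) = t • toE z := rfl
lemma toE_zero : toE (0 : Fin n → ℂ) = (0 : Eu n) := rfl

lemma eSq_eq (z : Fin n → ℂ) : eSq z = ‖toE z‖ ^ 2 := by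
  rw [EuclideanSpace.norm_eq, Real.sq_sqrt (by positivity)]
  unfold eSq
  refine Finset.sum_congr rfl fun i _ => ?_
  rw [← Complex.sq_norm]
  rfl

lemma eSq_nonneg (z : Fin n → ℂ) : 0 ≤ eSq z := by
  rw [eSq_eq]; positivity

/-- Any real-linear endomorphism of `ℂⁿ` is bounded in the Euclidean norm. -/
lemma exists_opbound (f : (Fin n → ℂ) →ₗ[ℝ] (Fin n → ℂ)) :
    ∃ M : ℝ, 0 < M ∧ ∀ z, ‖toE (f z)‖ ≤ M * ‖toE z‖ := by
  let g : Eu n →ₗ[ℝ] Eu n :=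
    { toFun := fun z => toE (f z)
      map_add' := fun x y => congrArg toE (f.map_add x y)
      map_smul' := fun t x => congrArg toE (f.map_smul t x) }
  let gc : Eu n →L[ℝ] Eu n := LinearMap.toContinuousLinearMap g
  refine ⟨‖gc‖ + 1, by positivity, fun z => ?_⟩
  have h1 : ‖gc (toE z)‖ ≤ ‖gc‖ * ‖toE z‖ := gc.le_opNorm _
  have h2 : gc (toE z) = toE (f z) := rfl
  rw [h2] at h1
  nlinarith [norm_nonneg (toE z)]

/-- Continuity of a real-linear endomorphism of `ℂⁿ`, through the Euclidean structure. -/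
lemma continuous_toE_linear (f : (Fin n → ℂ) →ₗ[ℝ] (Fin n → ℂ)) :
    Continuous (fun z : Fin n → ℂ => toE (f z)) := by
  let g : Eu n →ₗ[ℝ] Eu n :=
    { toFun := fun z => toE (f z)
      map_add' := fun x y => congrArg toE (f.map_add x y)
      map_smul' := fun t x => congrArg toE (f.map_smul t x) }
  let gc : Eu n →L[ℝ] Eu n := LinearMap.toContinuousLinearMap g
  have h1 : Continuous (fun z : Fin n → ℂ => toE z) :=
    PiLp.continuous_toLp 2 (fun _ : Fin n => ℂ)
  have h2 : Continuous gc := gc.continuous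
  exact h2.comp h1

/-- Gaussian integrability on `ℂ`. -/
lemma integrable_gauss_complex {γ : ℝ} (hγ : 0 < γ) :
    Integrable (fun v : ℂ => Real.exp (-γ * Complex.normSq v)) := by
  have h2 : Integrable (fun p : ℝ × ℝ =>
      Real.exp (-γ * p.1 ^ 2) * Real.exp (-γ * p.2 ^ 2)) :=
    (integrable_exp_neg_mul_sq hγ).mul_prod (integrable_exp_neg_mul_sq hγ)
  have h3 := (Complex.volume_preserving_equiv_real_prod.integrable_comp_emb
      Complex.measurableEquivRealProd.measurableEmbedding).mpr h2
  have h4 : ((fun p : ℝ × ℝ => Real.exp (-γ * p.1 ^ 2) * Real.exp (-γ * p.2 ^ 2)) ∘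
      Complex.measurableEquivRealProd) = fun v : ℂ => Real.exp (-γ * Complex.normSq v) := by
    funext v
    simp only [Function.comp_apply, Complex.measurableEquivRealProd_apply]
    rw [← Real.exp_add, Complex.normSq_apply]
    ring_nf
  rwa [h4] at h3

/-- Gaussian integrability on `ℂⁿ`. -/
lemma integrable_gauss {γ : ℝ} (hγ : 0 < γ) :
    Integrable (fun w : Fin n → ℂ => Real.exp (-γ * eSq w)) := by
  have h1 := MeasureTheory.Integrable.fintype_prod
    (f := fun (_ : Fin n) (v : ℂ) => Real.exp (-γ * Complex.normSq v))
    (fun _ => integrable_gauss_complex hγ)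
  have h2 : (fun w : Fin n → ℂ => ∏ i, Real.exp (-γ * Complex.normSq (w i)))
      = fun w : Fin n → ℂ => Real.exp (-γ * eSq w) := by
    funext w
    rw [← Real.exp_sum, eSq, Finset.mul_sum]
  rwa [h2] at h1

lemma one_le_jb (z : Fin n → ℂ) : 1 ≤ jb z := by
  rw [jb, Real.one_le_sqrt]
  · linarith [eSq_nonneg z]

lemma jb_le (z : Fin n → ℂ) : jb z ≤ 1 + eSq z := by
  have h0 : (0 : ℝ) ≤ 1 + eSq z := by linarith [eSq_nonneg z]
  have h1 := Real.sq_sqrt h0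
  have h2 := Real.sqrt_nonneg (1 + eSq z)
  have h3 : 1 ≤ Real.sqrt (1 + eSq z) := by
    rw [Real.one_le_sqrt]; linarith [eSq_nonneg z]
  rw [jb]
  nlinarith

/-- Polynomial absorption into a Gaussian. -/
lemma jb_rpow_le (N γ : ℝ) (hγ : 0 < γ) :
    ∃ A : ℝ, 0 < A ∧ ∀ z : Fin n → ℂ, jb z ^ N ≤ A * Real.exp (γ * eSq z) := by
  set k : ℕ := ⌈N⌉₊ with hk
  refine ⟨(k.factorial / γ ^ k) * Real.exp γ, by positivity, fun z => ?_⟩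
  have h1 : jb z ^ N ≤ jb z ^ (k : ℝ) :=
    Real.rpow_le_rpow_of_exponent_le (one_le_jb z) (le_trans (Nat.le_ceil N) le_rfl)
  rw [Real.rpow_natCast] at h1
  have h2 : jb z ^ k ≤ (1 + eSq z) ^ k :=
    pow_le_pow_left₀ (by linarith [one_le_jb z]) (jb_le z) k
  have h3 : (γ * (1 + eSq z)) ^ k ≤ k.factorial * Real.exp (γ * (1 + eSq z)) := by
    have hx : (0 : ℝ) ≤ γ * (1 + eSq z) := by
      have := eSq_nonneg z; positivity
    have h4 := Real.sum_le_exp_of_nonneg hx (k + 1)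
    have h5 : (γ * (1 + eSq z)) ^ k / k.factorial ≤
        ∑ i ∈ Finset.range (k + 1), (γ * (1 + eSq z)) ^ i / i.factorial := by
      refine Finset.single_le_sum (f := fun i => (γ * (1 + eSq z)) ^ i / i.factorial)
        (fun i _ => by positivity) (Finset.self_mem_range_succ k)
    have h6 : (0 : ℝ) < k.factorial := by positivity
    calc (γ * (1 + eSq z)) ^ k = ((γ * (1 + eSq z)) ^ k / k.factorial) * k.factorial := by
          field_simp
      _ ≤ Real.exp (γ * (1 + eSq z)) * k.factorial := by
          apply mul_le_mul_of_nonneg_right (h5.trans h4) h6.le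
      _ = k.factorial * Real.exp (γ * (1 + eSq z)) := by ring
  have hγk : (0 : ℝ) < γ ^ k := by positivity
  have h7 : (1 + eSq z) ^ k ≤ (k.factorial / γ ^ k) * Real.exp (γ * (1 + eSq z)) := by
    rw [div_mul_eq_mul_div, le_div_iff₀ hγk]
    calc (1 + eSq z) ^ k * γ ^ k = (γ * (1 + eSq z)) ^ k := by rw [mul_pow]; ring
      _ ≤ k.factorial * Real.exp (γ * (1 + eSq z)) := h3
  have h8 : (k.factorial / γ ^ k) * Real.exp (γ * (1 + eSq z))
      = ((k.factorial / γ ^ k) * Real.exp γ) * Real.exp (γ * eSq z) := by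
    rw [mul_add γ 1 (eSq z), Real.exp_add]; ring_nf
  calc jb z ^ N ≤ jb z ^ k := h1
    _ ≤ (1 + eSq z) ^ k := h2
    _ ≤ (k.factorial / γ ^ k) * Real.exp (γ * (1 + eSq z)) := h7
    _ = ((k.factorial / γ ^ k) * Real.exp γ) * Real.exp (γ * eSq z) := h8

/-- Cone separation: if `ζ` is in a small cone around `b` and `w` stays at distance `t·r`
from every point `t•b` of the ray through `b`, then `ζ` and `w` are proportionally far. -/
lemma cone_sep {b : Eu n} (hb : b ≠ 0) {r : ℝ} (hr : 0 < r) {ζ w : Eu n}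
    (hζ : ‖(‖b‖ : ℝ) • ζ - (‖ζ‖ : ℝ) • b‖ < (r / 2) * ‖ζ‖)
    (hw : ∀ t : ℝ, 0 < t → t * r ≤ ‖w - t • b‖) :
    (r / (2 * ‖b‖)) / (2 + r / (2 * ‖b‖)) * (‖ζ‖ + ‖w‖) ≤ ‖ζ - w‖ := by
  have hbn : (0 : ℝ) < ‖b‖ := norm_pos_iff.mpr hb
  set μ : ℝ := r / (2 * ‖b‖) with hμdef
  have hμ : 0 < μ := by positivity
  have hζ0 : ζ ≠ 0 := by
    intro h
    rw [h] at hζ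
    simp at hζ
  have hζn : (0 : ℝ) < ‖ζ‖ := norm_pos_iff.mpr hζ0
  set t : ℝ := ‖ζ‖ / ‖b‖ with htdef
  have ht : 0 < t := by positivity
  have key1 : ‖ζ - t • b‖ < μ * ‖ζ‖ := by
    have he : ζ - t • b = (‖b‖⁻¹ : ℝ) • ((‖b‖ : ℝ) • ζ - (‖ζ‖ : ℝ) • b) := by
      rw [smul_sub, smul_smul, smul_smul, inv_mul_cancel₀ (ne_of_gt hbn), one_smul, htdef,
        div_eq_inv_mul]
    rw [he, norm_smul, Real.norm_eq_abs, abs_of_pos (by positivity : (0:ℝ) < ‖b‖⁻¹)]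
    calc ‖b‖⁻¹ * ‖(‖b‖ : ℝ) • ζ - (‖ζ‖ : ℝ) • b‖ < ‖b‖⁻¹ * ((r / 2) * ‖ζ‖) := by
          exact mul_lt_mul_of_pos_left hζ (by positivity)
      _ = μ * ‖ζ‖ := by rw [hμdef]; field_simp
  have key2 : t * r ≤ ‖w - t • b‖ := hw t ht
  have tri : ‖w - t • b‖ ≤ ‖w - ζ‖ + ‖ζ - t • b‖ := by
    have := norm_add_le (w - ζ) (ζ - t • b)
    rwa [sub_add_sub_cancel] at this
  have htr : t * r = 2 * μ * ‖ζ‖ := by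
    rw [htdef, hμdef]; field_simp
  have hd1 : μ * ‖ζ‖ ≤ ‖w - ζ‖ := by
    have := key2.trans tri
    rw [htr] at this
    linarith
  have hd2 : ‖w‖ ≤ ‖w - ζ‖ + ‖ζ‖ := by
    have := norm_add_le (w - ζ) ζ
    rwa [sub_add_cancel] at this
  rw [norm_sub_rev ζ w]
  have hden : (0 : ℝ) < 2 + μ := by linarith
  rw [div_mul_eq_mul_div, div_le_iff₀ hden]
  nlinarith [norm_nonneg (w - ζ)]

/-- An open set contains a Euclidean ball around each of its points. -/
lemma open_ball_sub {V : Set (Fin n → ℂ)} (hV : IsOpen V) {w₀ : Fin n → ℂ} (hw : w₀ ∈ V) :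
    ∃ r : ℝ, 0 < r ∧ ∀ w : Fin n → ℂ, ‖toE w - toE w₀‖ < r → w ∈ V := by
  have hc : Continuous (@WithLp.ofLp 2 (Fin n → ℂ)) := PiLp.continuous_ofLp 2 _
  have hVo : IsOpen ((@WithLp.ofLp 2 (Fin n → ℂ)) ⁻¹' V) := hV.preimage hc
  have hmem : toE w₀ ∈ (@WithLp.ofLp 2 (Fin n → ℂ)) ⁻¹' V := hw
  obtain ⟨r, hr, hball⟩ := Metric.isOpen_iff.mp hVo (toE w₀) hmem
  refine ⟨r, hr, fun w h => ?_⟩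
  have : toE w ∈ Metric.ball (toE w₀) r := by
    rw [Metric.mem_ball, dist_eq_norm]; exact h
  exact hball this

end Stmt10Aux

set_option maxHeartbeats 2000000 in
open Stmt10Aux in
/-- Under the same Bergman-form hypotheses as Statement 9, the operator
`G` transports singularities by `κ♭`: if `w₀ ≠ 0` and `w₀ ∉ WF^{1/2}_Φ(u)`, then
`κ♭(w₀) ∉ WF^{1/2}_Φ(Gu)`; consequently `WF^{1/2}_Φ(Gu) ⊆ κ♭(WF^{1/2}_Φ(u))`. -/
theorem stmt_10 (n : ℕ) (hn : 1 ≤ n) (Φ Φt : (Fin n → ℂ) → ℝ)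
    (hΦ : IsSPSH Φ) (hΦt : IsSPSH Φt) (hle : ∀ z, Φt z ≤ Φ z)
    (κ : (Fin n → ℂ) ≃ₗ[ℝ] (Fin n → ℂ)) (a : ℂ)
    (Ψ : (Fin n → ℂ) → (Fin n → ℂ) → ℂ) (hΨ : IsCQuad2 Ψ)
    (R : (Fin n → ℂ) → (Fin n → ℂ) → ℝ) (hRq : IsRQuadPair R)
    (hR0 : ∀ z w, 0 ≤ R z w)
    (hre : ∀ z w : Fin n → ℂ, 2 * (Ψ z (star w)).re = Φt z + Φ w - R z w)
    (C c : ℝ) (hC : 0 < C) (hc : 0 < c)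
    (hsand : ∀ z w : Fin n → ℂ, c * eSq (z - κ w) ≤ R z w ∧ R z w ≤ C * eSq (z - κ w))
    (u : (Fin n → ℂ) → ℂ) (hu : Differentiable ℂ u)
    (C₀ N : ℝ) (hC₀ : 0 < C₀)
    (hg : ∀ w : Fin n → ℂ, ‖u w‖ ≤ C₀ * jb w ^ N * Real.exp (Φ w)) :
    (∀ w₀ : Fin n → ℂ, w₀ ≠ 0 → w₀ ∉ wf Φ u → κ w₀ ∉ wf Φ (berg a Ψ Φ u)) ∧
    wf Φ (berg a Ψ Φ u) ⊆ (fun w => κ w) '' wf Φ u := by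
  classical
  have main : ∀ w₀ : Fin n → ℂ, w₀ ≠ 0 → w₀ ∉ wf Φ u → κ w₀ ∉ wf Φ (berg a Ψ Φ u) := by
    intro w₀ hw₀ hnot
    have hex : ∃ V : Set (Fin n → ℂ), IsOpen V ∧ IsConic V ∧ (0 : Fin n → ℂ) ∉ V ∧ w₀ ∈ V ∧
        ∃ C1 c1 : ℝ, 0 < C1 ∧ 0 < c1 ∧ ∀ z ∈ V, ‖u z‖ ≤ C1 * Real.exp (Φ z - c1 * eSq z) := by
      by_contra h
      exact hnot ⟨hw₀, h⟩
    obtain ⟨V, hVo, hVc, hV0, hVw, C₁, c₁, hC₁, hc₁, hVb⟩ := hex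
    have hb0 : toE w₀ ≠ (0 : Eu n) := fun h => hw₀ (congrArg WithLp.ofLp h)
    have hbn : (0 : ℝ) < ‖toE w₀‖ := norm_pos_iff.mpr hb0
    obtain ⟨r, hr, hball⟩ := open_ball_sub hVo hVw
    obtain ⟨M, hM0, hM⟩ := exists_opbound (κ.toLinearMap)
    obtain ⟨M', hM'0, hM'⟩ := exists_opbound (κ.symm.toLinearMap)
    have hMb : ∀ z : Fin n → ℂ, ‖toE (κ z)‖ ≤ M * ‖toE z‖ := fun z => hM z
    have hM'b : ∀ z : Fin n → ℂ, ‖toE (κ.symm z)‖ ≤ M' * ‖toE z‖ := fun z => hM' z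
    set ε : ℝ := (r / (2 * ‖toE w₀‖)) / (2 + r / (2 * ‖toE w₀‖)) with hεdef
    have hεpos : 0 < ε := by positivity
    set V' : Set (Fin n → ℂ) :=
      {z | ‖(‖toE w₀‖ : ℝ) • toE (κ.symm z) - (‖toE (κ.symm z)‖ : ℝ) • toE w₀‖
            < (r / 2) * ‖toE (κ.symm z)‖} with hV'def
    have hcont : Continuous (fun z : Fin n → ℂ => toE (κ.symm z)) :=
      continuous_toE_linear κ.symm.toLinearMap
    have hV'o : IsOpen V' := by
      rw [hV'def]
      apply isOpen_lt
      · exact ((hcont.const_smul (‖toE w₀‖ : ℝ)).sub (hcont.norm.smul (continuous_const (y := toE w₀)))).norm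
      · exact continuous_const.mul hcont.norm
    have hV'mem : κ w₀ ∈ V' := by
      show ‖(‖toE w₀‖ : ℝ) • toE (κ.symm (κ w₀)) - (‖toE (κ.symm (κ w₀))‖ : ℝ) • toE w₀‖
            < (r / 2) * ‖toE (κ.symm (κ w₀))‖
      rw [κ.symm_apply_apply, sub_self, norm_zero]
      positivity
    have hV'0 : (0 : Fin n → ℂ) ∉ V' := by
      intro h
      have h1 : κ.symm (0 : Fin n → ℂ) = 0 := map_zero κ.symm
      have h2 : ‖(‖toE w₀‖ : ℝ) • toE (κ.symm (0 : Fin n → ℂ))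
            - (‖toE (κ.symm (0 : Fin n → ℂ))‖ : ℝ) • toE w₀‖
            < (r / 2) * ‖toE (κ.symm (0 : Fin n → ℂ))‖ := h
      rw [h1, toE_zero, smul_zero, norm_zero, zero_smul, sub_zero, norm_zero, mul_zero] at h2
      exact lt_irrefl 0 h2
    have hV'c : IsConic V' := by
      intro z hz t ht
      have hz' : ‖(‖toE w₀‖ : ℝ) • toE (κ.symm z) - (‖toE (κ.symm z)‖ : ℝ) • toE w₀‖
            < (r / 2) * ‖toE (κ.symm z)‖ := hz
      show ‖(‖toE w₀‖ : ℝ) • toE (κ.symm (t • z)) - (‖toE (κ.symm (t • z))‖ : ℝ) • toE w₀‖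
            < (r / 2) * ‖toE (κ.symm (t • z))‖
      have h1 : κ.symm (t • z) = t • κ.symm z := map_smul κ.symm t z
      rw [h1, toE_smul, norm_smul, Real.norm_eq_abs, abs_of_pos ht]
      calc ‖(‖toE w₀‖ : ℝ) • (t • toE (κ.symm z)) - (t * ‖toE (κ.symm z)‖ : ℝ) • toE w₀‖
          = ‖t • ((‖toE w₀‖ : ℝ) • toE (κ.symm z) - (‖toE (κ.symm z)‖ : ℝ) • toE w₀)‖ := by
            rw [smul_sub, smul_smul, smul_smul, smul_smul, mul_comm (‖toE w₀‖ : ℝ) t]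
        _ = t * ‖(‖toE w₀‖ : ℝ) • toE (κ.symm z) - (‖toE (κ.symm z)‖ : ℝ) • toE w₀‖ := by
            rw [norm_smul, Real.norm_eq_abs, abs_of_pos ht]
        _ < t * ((r / 2) * ‖toE (κ.symm z)‖) := mul_lt_mul_of_pos_left hz' ht
        _ = (r / 2) * (t * ‖toE (κ.symm z)‖) := by ring
    have hout : ∀ w, w ∉ V → ∀ t : ℝ, 0 < t → t * r ≤ ‖toE w - t • toE w₀‖ := by
      intro w hw t ht
      by_contra hlt
      push_neg at hlt
      have he : toE (t⁻¹ • w) - toE w₀ = t⁻¹ • (toE w - t • toE w₀) := by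
        rw [toE_smul, smul_sub, smul_smul, inv_mul_cancel₀ (ne_of_gt ht), one_smul]
      have h1 : ‖toE (t⁻¹ • w) - toE w₀‖ < r := by
        rw [he, norm_smul, Real.norm_eq_abs, abs_of_pos (inv_pos.mpr ht)]
        calc t⁻¹ * ‖toE w - t • toE w₀‖ < t⁻¹ * (t * r) :=
              mul_lt_mul_of_pos_left hlt (inv_pos.mpr ht)
          _ = r := by field_simp
      have h2 := hball _ h1
      have h3 := hVc _ h2 t ht
      rw [smul_smul, mul_inv_cancel₀ (ne_of_gt ht), one_smul] at h3
      exact hw h3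
    have hsep : ∀ z ∈ V', ∀ w, w ∉ V →
        ε * (‖toE (κ.symm z)‖ + ‖toE w‖) ≤ ‖toE (κ.symm z) - toE w‖ := by
      intro z hz w hw
      exact cone_sep hb0 hr hz (hout w hw)
    set K : ℝ := M' ^ 2 * M ^ 2 with hKdef
    have hK : 0 < K := by positivity
    have hη : ∀ z ∈ V', ∀ w, w ∉ V →
        (ε ^ 2 / K) * eSq z + (ε ^ 2 * M ^ 2 / K) * eSq w ≤ eSq (z - κ w) := by
      intro z hz w hw
      have h1 := hsep z hz w hw
      have h2 : ‖toE (κ.symm z) - toE w‖ ≤ M' * ‖toE (z - κ w)‖ := by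
        have he : toE (κ.symm z) - toE w = toE (κ.symm (z - κ w)) := by
          rw [map_sub, κ.symm_apply_apply, toE_sub]
        rw [he]
        exact hM'b _
      have h3 : ‖toE z‖ ≤ M * ‖toE (κ.symm z)‖ := by
        have he : toE z = toE (κ (κ.symm z)) := by rw [κ.apply_symm_apply]
        rw [he]; exact hMb _
      have h12 : ε * (‖toE (κ.symm z)‖ + ‖toE w‖) ≤ M' * ‖toE (z - κ w)‖ := h1.trans h2
      rw [eSq_eq, eSq_eq, eSq_eq]
      have hZW : (ε * (‖toE (κ.symm z)‖ + ‖toE w‖)) ^ 2 ≤ (M' * ‖toE (z - κ w)‖) ^ 2 := by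
        apply pow_le_pow_left₀ (by positivity) h12
      have hS2 : ‖toE z‖ ^ 2 ≤ (M * ‖toE (κ.symm z)‖) ^ 2 :=
        pow_le_pow_left₀ (norm_nonneg _) h3 2
      have hmain : ε ^ 2 * ‖toE z‖ ^ 2 + ε ^ 2 * M ^ 2 * ‖toE w‖ ^ 2
          ≤ K * ‖toE (z - κ w)‖ ^ 2 := by
        nlinarith [hZW, hS2, sq_nonneg ε, sq_nonneg M,
          norm_nonneg (toE (κ.symm z)), norm_nonneg (toE w),
          mul_nonneg (norm_nonneg (toE (κ.symm z))) (norm_nonneg (toE w)),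
          mul_nonneg (mul_nonneg (sq_nonneg ε) (sq_nonneg M))
            (mul_nonneg (norm_nonneg (toE (κ.symm z))) (norm_nonneg (toE w)))]
      calc (ε ^ 2 / K) * ‖toE z‖ ^ 2 + (ε ^ 2 * M ^ 2 / K) * ‖toE w‖ ^ 2
          = (ε ^ 2 * ‖toE z‖ ^ 2 + ε ^ 2 * M ^ 2 * ‖toE w‖ ^ 2) / K := by ring
        _ ≤ ‖toE (z - κ w)‖ ^ 2 := by
            rw [div_le_iff₀ hK]
            nlinarith [hmain]
    have hZle : ∀ z w : Fin n → ℂ, eSq z ≤ 2 * eSq (z - κ w) + 2 * M ^ 2 * eSq w := by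
      intro z w
      have h1 : ‖toE z‖ ≤ ‖toE (z - κ w)‖ + ‖toE (κ w)‖ := by
        have he : toE z = toE (z - κ w) + toE (κ w) := by
          rw [toE_sub, sub_add_cancel]
        rw [he]; exact norm_add_le _ _
      have h2 : ‖toE (κ w)‖ ≤ M * ‖toE w‖ := hMb _
      rw [eSq_eq, eSq_eq, eSq_eq]
      nlinarith [norm_nonneg (toE z), norm_nonneg (toE (z - κ w)), norm_nonneg (toE w),
        sq_nonneg (‖toE (z - κ w)‖ - M * ‖toE w‖)]
    obtain ⟨A, hA, hjb⟩ := jb_rpow_le (n := n) N (c * (ε ^ 2 * M ^ 2 / K) / 2) (by positivity)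
    set β₁ : ℝ := min (c / 2) (c₁ / (4 * M ^ 2)) with hβ₁def
    have hβ₁ : 0 < β₁ := lt_min (by positivity) (by positivity)
    set c₂ : ℝ := min β₁ (c * (ε ^ 2 / K)) with hc₂def
    have hc₂ : 0 < c₂ := lt_min hβ₁ (by positivity)
    set γ₀ : ℝ := min (c₁ / 2) (c * (ε ^ 2 * M ^ 2 / K) / 2) with hγ₀def
    have hγ₀ : 0 < γ₀ := lt_min (by positivity) (by positivity)
    set D : ℝ := max C₁ (C₀ * A) with hDdef
    have hD : 0 < D := lt_max_iff.mpr (Or.inl hC₁)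
    have hpt : ∀ z ∈ V', ∀ w : Fin n → ℂ,
        ‖Complex.exp (2 * Ψ z (star w)) * u w * ((Real.exp (-2 * Φ w) : ℝ) : ℂ)‖
          ≤ D * Real.exp (Φ z - c₂ * eSq z) * Real.exp (-γ₀ * eSq w) := by
      intro z hz w
      have hnF : ‖Complex.exp (2 * Ψ z (star w)) * u w * ((Real.exp (-2 * Φ w) : ℝ) : ℂ)‖
          = Real.exp (Φt z + Φ w - R z w) * ‖u w‖ * Real.exp (-2 * Φ w) := by
        rw [norm_mul, norm_mul]
        congr 1
        · congr 1
          rw [Complex.norm_exp]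
          congr 1
          have h2re : (2 * Ψ z (star w)).re = 2 * (Ψ z (star w)).re := by simp
          rw [h2re, hre z w]
        · rw [Complex.norm_real, Real.norm_eq_abs, Real.abs_exp]
      rw [hnF]
      have hDexp : D * Real.exp (Φ z - c₂ * eSq z) * Real.exp (-γ₀ * eSq w)
          = D * Real.exp ((Φ z - c₂ * eSq z) + (-γ₀ * eSq w)) := by
        rw [Real.exp_add]; ring
      rw [hDexp]
      have h4 := eSq_nonneg (z - κ w)
      have h5 := eSq_nonneg w
      have h6 := eSq_nonneg z
      have hle1 := hle z
      by_cases hwV : w ∈ V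
      · have h1 : ‖u w‖ ≤ C₁ * Real.exp (Φ w - c₁ * eSq w) := hVb w hwV
        have hR1 : c * eSq (z - κ w) ≤ R z w := (hsand z w).1
        have hZ : eSq z ≤ 2 * eSq (z - κ w) + 2 * M ^ 2 * eSq w := hZle z w
        calc Real.exp (Φt z + Φ w - R z w) * ‖u w‖ * Real.exp (-2 * Φ w)
            ≤ Real.exp (Φt z + Φ w - R z w) * (C₁ * Real.exp (Φ w - c₁ * eSq w))
              * Real.exp (-2 * Φ w) := by gcongr
          _ = C₁ * Real.exp ((Φt z + Φ w - R z w) + (Φ w - c₁ * eSq w) + (-2 * Φ w)) := by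
              rw [Real.exp_add, Real.exp_add]; ring
          _ ≤ D * Real.exp ((Φ z - c₂ * eSq z) + (-γ₀ * eSq w)) := by
              refine mul_le_mul (le_max_left _ _) (Real.exp_le_exp.mpr ?_)
                (Real.exp_pos _).le hD.le
              have hb1 : c₂ ≤ β₁ := min_le_left _ _
              have hb2 : β₁ ≤ c / 2 := min_le_left _ _
              have hb3 : β₁ * (4 * M ^ 2) ≤ c₁ := by
                have := min_le_right (c / 2) (c₁ / (4 * M ^ 2))
                rw [hβ₁def]
                calc min (c / 2) (c₁ / (4 * M ^ 2)) * (4 * M ^ 2)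
                    ≤ (c₁ / (4 * M ^ 2)) * (4 * M ^ 2) := by
                      apply mul_le_mul_of_nonneg_right this (by positivity)
                  _ = c₁ := by field_simp
              have hg1 : γ₀ ≤ c₁ / 2 := min_le_left _ _
              have t1 : c₂ * eSq z ≤ β₁ * eSq z := mul_le_mul_of_nonneg_right hb1 h6
              have t2 : β₁ * eSq z ≤ β₁ * (2 * eSq (z - κ w) + 2 * M ^ 2 * eSq w) :=
                mul_le_mul_of_nonneg_left hZ hβ₁.le
              have t3 : β₁ * (2 * eSq (z - κ w)) ≤ (c / 2) * (2 * eSq (z - κ w)) :=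
                mul_le_mul_of_nonneg_right hb2 (by positivity)
              have t4 : β₁ * (4 * M ^ 2) * eSq w ≤ c₁ * eSq w :=
                mul_le_mul_of_nonneg_right hb3 h5
              have t5 : γ₀ * eSq w ≤ (c₁ / 2) * eSq w :=
                mul_le_mul_of_nonneg_right hg1 h5
              nlinarith [t1, t2, t3, t4, t5, hR1, hle1]
      · have h2 : jb w ^ N ≤ A * Real.exp (c * (ε ^ 2 * M ^ 2 / K) / 2 * eSq w) := hjb w
        have h1 : ‖u w‖ ≤ C₀ * (A * Real.exp (c * (ε ^ 2 * M ^ 2 / K) / 2 * eSq w))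
            * Real.exp (Φ w) := by
          refine (hg w).trans ?_
          gcongr
        have hR2 : c * eSq (z - κ w) ≤ R z w := (hsand z w).1
        have hP : (ε ^ 2 / K) * eSq z + (ε ^ 2 * M ^ 2 / K) * eSq w ≤ eSq (z - κ w) :=
          hη z hz w hwV
        calc Real.exp (Φt z + Φ w - R z w) * ‖u w‖ * Real.exp (-2 * Φ w)
            ≤ Real.exp (Φt z + Φ w - R z w)
              * (C₀ * (A * Real.exp (c * (ε ^ 2 * M ^ 2 / K) / 2 * eSq w)) * Real.exp (Φ w))
              * Real.exp (-2 * Φ w) := by gcongr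
          _ = (C₀ * A) * Real.exp ((Φt z + Φ w - R z w)
                + (c * (ε ^ 2 * M ^ 2 / K) / 2 * eSq w) + Φ w + (-2 * Φ w)) := by
              rw [Real.exp_add, Real.exp_add, Real.exp_add]; ring
          _ ≤ D * Real.exp ((Φ z - c₂ * eSq z) + (-γ₀ * eSq w)) := by
              refine mul_le_mul (le_max_right _ _) (Real.exp_le_exp.mpr ?_)
                (Real.exp_pos _).le hD.le
              have hb1 : c₂ ≤ c * (ε ^ 2 / K) := min_le_right _ _
              have hg1 : γ₀ ≤ c * (ε ^ 2 * M ^ 2 / K) / 2 := min_le_right _ _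
              have t1 : c₂ * eSq z ≤ c * (ε ^ 2 / K) * eSq z :=
                mul_le_mul_of_nonneg_right hb1 h6
              have t2 : γ₀ * eSq w ≤ c * (ε ^ 2 * M ^ 2 / K) / 2 * eSq w :=
                mul_le_mul_of_nonneg_right hg1 h5
              have t3 : c * ((ε ^ 2 / K) * eSq z + (ε ^ 2 * M ^ 2 / K) * eSq w)
                  ≤ c * eSq (z - κ w) := mul_le_mul_of_nonneg_left hP hc.le
              nlinarith [t1, t2, t3, hR2, hle1]
    intro hmem
    apply hmem.2
    set I₀ : ℝ := ∫ w : Fin n → ℂ, Real.exp (-γ₀ * eSq w) with hI₀def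
    have hI₀ : 0 ≤ I₀ := integral_nonneg fun w => (Real.exp_pos _).le
    refine ⟨V', hV'o, hV'c, hV'0, hV'mem, ‖a‖ * D * I₀ + 1, c₂, by positivity, hc₂, ?_⟩
    intro z hz
    have hint : Integrable (fun w : Fin n → ℂ =>
        D * Real.exp (Φ z - c₂ * eSq z) * Real.exp (-γ₀ * eSq w)) :=
      (integrable_gauss hγ₀).const_mul _
    have hbnd := norm_integral_le_of_norm_le hint
      (Filter.Eventually.of_forall (fun w => hpt z hz w))
    rw [integral_const_mul] at hbnd
    have hbergeq : berg a Ψ Φ u z = a * ∫ w : Fin n → ℂ,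
        Complex.exp (2 * Ψ z (star w)) * u w * ((Real.exp (-2 * Φ w) : ℝ) : ℂ) := rfl
    rw [hbergeq, norm_mul]
    calc ‖a‖ * ‖∫ w : Fin n → ℂ,
          Complex.exp (2 * Ψ z (star w)) * u w * ((Real.exp (-2 * Φ w) : ℝ) : ℂ)‖
        ≤ ‖a‖ * (D * Real.exp (Φ z - c₂ * eSq z) * I₀) :=
          mul_le_mul_of_nonneg_left hbnd (norm_nonneg a)
      _ = (‖a‖ * D * I₀) * Real.exp (Φ z - c₂ * eSq z) := by ring
      _ ≤ (‖a‖ * D * I₀ + 1) * Real.exp (Φ z - c₂ * eSq z) := by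
          have := Real.exp_pos (Φ z - c₂ * eSq z)
          nlinarith
  refine ⟨main, ?_⟩
  intro z hz
  by_cases h : κ.symm z ∈ wf Φ u
  · exact ⟨κ.symm z, h, κ.apply_symm_apply z⟩
  · exfalso
    have hz0 : z ≠ 0 := hz.1
    have hs0 : κ.symm z ≠ 0 := by
      intro h0
      apply hz0
      rw [← κ.apply_symm_apply z, h0, map_zero]
    have := main (κ.symm z) hs0 h
    rw [κ.apply_symm_apply] at this
    exact this hz
end
end

section
/- Let Q ∈ M_{2n×2n}(ℂ) be symmetric, let J = [[0, I],[−I, 0]] be the standard 2n×2n symplectic matrix, and let F = JQ with real and imaginary parts Re F = (F + F̄)/2 and Im F = (F − F̄)/(2i). Suppose X ∈ ℝ^{2n} satisfies (Re F)(Im F)^j X = 0 for all j = 0, 1, …, 2n−1. Then for every t ∈ ℝ, e^{−2itF} X = e^{2t·Im F} X = Σ_{k=0}^{∞} ((2t)^k / k!) (Im F)^k X; in particular e^{−2itF} X ∈ ℝ^{2n} for all t ∈ ℝ. -/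
open Matrix

noncomputable section

lemma sum_mulVec' {m : Type*} [Fintype m] {R : Type*} [CommRing R]
    (s : Finset ℕ) (M : ℕ → Matrix m m R) (v : m → R) :
    (∑ i ∈ s, M i) *ᵥ v = ∑ i ∈ s, (M i) *ᵥ v := by
  classical
  induction s using Finset.induction with
  | empty => simp [Matrix.zero_mulVec]
  | insert _ _ h ih => simp [Finset.sum_insert h, Matrix.add_mulVec, ih]

lemma mulVec_sum' {m : Type*} [Fintype m] {R : Type*} [CommRing R]
    (s : Finset ℕ) (A : Matrix m m R) (v : ℕ → m → R) :
    A *ᵥ (∑ i ∈ s, v i) = ∑ i ∈ s, A *ᵥ v i := by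
  simp_rw [← Matrix.mulVecLin_apply]
  exact map_sum A.mulVecLin v s

lemma singular_all {n : ℕ} (ReF ImF : Matrix (Fin n ⊕ Fin n) (Fin n ⊕ Fin n) ℝ)
    (X : Fin n ⊕ Fin n → ℝ) (hn : 1 ≤ n)
    (hX : ∀ j : ℕ, j ≤ 2 * n - 1 → ReF.mulVec ((ImF ^ j).mulVec X) = 0) :
    ∀ j : ℕ, ReF *ᵥ ((ImF ^ j) *ᵥ X) = 0 := by
  classical
  have hCH : ImF ^ (n + n) = -∑ i ∈ Finset.range (n + n), ImF.charpoly.coeff i • ImF ^ i := by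
    have h1 := ImF.aeval_self_charpoly
    have h2 := ImF.charpoly_monic.as_sum
    rw [ImF.charpoly_natDegree_eq_dim] at h2
    have hcard : Fintype.card (Fin n ⊕ Fin n) = n + n := by simp
    rw [hcard] at h2
    rw [h2] at h1
    simp only [map_add, map_pow, Polynomial.aeval_X, map_sum, _root_.map_mul,
      Polynomial.aeval_C] at h1
    have hsm : ∀ i, (algebraMap ℝ (Matrix (Fin n ⊕ Fin n) (Fin n ⊕ Fin n) ℝ))
        (ImF.charpoly.coeff i) * ImF ^ i = ImF.charpoly.coeff i • ImF ^ i :=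
      fun i => by rw [Algebra.smul_def]
    simp_rw [hsm] at h1
    exact eq_neg_of_add_eq_zero_left h1
  intro j
  induction j using Nat.strong_induction_on with
  | _ j ih =>
    by_cases hj : j ≤ 2 * n - 1
    · exact hX j hj
    · have hsplit : ImF ^ j = ImF ^ (j - (n + n)) * ImF ^ (n + n) := by
        rw [← pow_add]; congr 1; omega
      rw [hsplit, hCH, mul_neg, Finset.mul_sum, Matrix.neg_mulVec, sum_mulVec',
        Matrix.mulVec_neg, mulVec_sum']
      have hz : ∀ i ∈ Finset.range (n + n),
          ReF *ᵥ ((ImF ^ (j - (n + n)) * (ImF.charpoly.coeff i • ImF ^ i)) *ᵥ X) = 0 := by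
        intro i hi
        have he : ImF ^ (j - (n + n)) * (ImF.charpoly.coeff i • ImF ^ i)
            = ImF.charpoly.coeff i • ImF ^ (j - (n + n) + i) := by
          rw [mul_smul_comm, ← pow_add]
        rw [he, Matrix.smul_mulVec, Matrix.mulVec_smul,
          ih (j - (n + n) + i) (by simp at hi; omega)]
        simp
      rw [Finset.sum_congr rfl hz]
      simp

/-- Let `Q` be a symmetric complex `2n×2n` matrix, `J` the standard
symplectic matrix, `F = JQ`, with real and imaginary parts `Re F`, `Im F`.  If
`X ∈ ℝ^{2n}` satisfies `(Re F)(Im F)^j X = 0` for `j = 0, …, 2n−1`, then for every `t ∈ ℝ`,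
`e^{−2itF} X = e^{2t·Im F} X = Σ_k ((2t)^k/k!) (Im F)^k X`; in particular
`e^{−2itF} X ∈ ℝ^{2n}`. -/
theorem stmt_15 (n : ℕ) (hn : 1 ≤ n)
    (Q : Matrix (Fin n ⊕ Fin n) (Fin n ⊕ Fin n) ℂ) (hQ : Qᵀ = Q)
    (J : Matrix (Fin n ⊕ Fin n) (Fin n ⊕ Fin n) ℂ)
    (hJ : J = Matrix.fromBlocks 0 1 (-1) 0)
    (F : Matrix (Fin n ⊕ Fin n) (Fin n ⊕ Fin n) ℂ) (hF : F = J * Q)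
    (ReF ImF : Matrix (Fin n ⊕ Fin n) (Fin n ⊕ Fin n) ℝ)
    (hRe : ReF = F.map Complex.re) (hIm : ImF = F.map Complex.im)
    (X : Fin n ⊕ Fin n → ℝ)
    (hX : ∀ j : ℕ, j ≤ 2 * n - 1 → ReF.mulVec ((ImF ^ j).mulVec X) = 0)
    (t : ℝ) :
    ((NormedSpace.exp (((-2 : ℂ) * Complex.I * (t : ℂ)) • F)).mulVec (fun i => (X i : ℂ))
        = fun i => ((NormedSpace.exp ((2 * t) • ImF)).mulVec X i : ℂ)) ∧
    (NormedSpace.exp ((2 * t) • ImF)).mulVec X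
        = ∑' k : ℕ, ((2 * t) ^ k / (Nat.factorial k : ℝ)) • (ImF ^ k).mulVec X := by
  classical
  have hX' := singular_all ReF ImF X hn hX
  -- decomposition of F
  have hdecomp : F = ReF.map Complex.ofReal + Complex.I • ImF.map Complex.ofReal := by
    ext i j
    simp only [hRe, hIm, Matrix.add_apply, Matrix.map_apply, Matrix.smul_apply, smul_eq_mul]
    rw [mul_comm, Complex.re_add_im]
  have hmap : ∀ (M : Matrix (Fin n ⊕ Fin n) (Fin n ⊕ Fin n) ℝ) (w : Fin n ⊕ Fin n → ℝ),
      (M.map Complex.ofReal) *ᵥ (fun i => ((w i : ℝ) : ℂ)) = fun i => ((M *ᵥ w) i : ℂ) := by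
    intro M w
    funext i
    exact (RingHom.map_mulVec Complex.ofRealHom M w i).symm
  have hstep : ∀ v : Fin n ⊕ Fin n → ℝ, ReF *ᵥ v = 0 →
      F *ᵥ (fun i => ((v i : ℝ) : ℂ)) = Complex.I • fun i => (((ImF *ᵥ v) i : ℝ) : ℂ) := by
    intro v hv
    rw [hdecomp, Matrix.add_mulVec, Matrix.smul_mulVec, hmap, hmap]
    simp only [hv]
    funext i
    simp
  have key : ∀ k : ℕ, (F ^ k) *ᵥ (fun i => ((X i : ℝ) : ℂ))
      = Complex.I ^ k • fun i => ((((ImF ^ k) *ᵥ X) i : ℝ) : ℂ) := by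
    intro k
    induction k with
    | zero => simp [Matrix.one_mulVec]
    | succ k ih =>
      rw [pow_succ' F, ← Matrix.mulVec_mulVec, ih, Matrix.mulVec_smul, hstep _ (hX' k),
        smul_smul, ← pow_succ]
      congr 1
      funext i
      simp [Matrix.mulVec_mulVec, pow_succ' ImF]
  -- normed structure
  letI : SeminormedRing (Matrix (Fin n ⊕ Fin n) (Fin n ⊕ Fin n) ℝ) :=
    Matrix.linftyOpSemiNormedRing
  letI : NormedRing (Matrix (Fin n ⊕ Fin n) (Fin n ⊕ Fin n) ℝ) := Matrix.linftyOpNormedRing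
  letI : NormedAlgebra ℝ (Matrix (Fin n ⊕ Fin n) (Fin n ⊕ Fin n) ℝ) :=
    Matrix.linftyOpNormedAlgebra
  letI : SeminormedRing (Matrix (Fin n ⊕ Fin n) (Fin n ⊕ Fin n) ℂ) :=
    Matrix.linftyOpSemiNormedRing
  letI : NormedRing (Matrix (Fin n ⊕ Fin n) (Fin n ⊕ Fin n) ℂ) := Matrix.linftyOpNormedRing
  letI : NormedAlgebra ℂ (Matrix (Fin n ⊕ Fin n) (Fin n ⊕ Fin n) ℂ) :=
    Matrix.linftyOpNormedAlgebra
  -- continuous linear maps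
  let LR : Matrix (Fin n ⊕ Fin n) (Fin n ⊕ Fin n) ℝ →ₗ[ℝ] (Fin n ⊕ Fin n → ℝ) :=
    { toFun := fun M => M *ᵥ X
      map_add' := fun A B => Matrix.add_mulVec A B X
      map_smul' := fun c M => Matrix.smul_mulVec c M X }
  let φR : Matrix (Fin n ⊕ Fin n) (Fin n ⊕ Fin n) ℝ →L[ℝ] (Fin n ⊕ Fin n → ℝ) :=
    ⟨LR, LR.continuous_of_finiteDimensional⟩
  let LC : Matrix (Fin n ⊕ Fin n) (Fin n ⊕ Fin n) ℂ →ₗ[ℂ] (Fin n ⊕ Fin n → ℂ) :=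
    { toFun := fun M => M *ᵥ (fun i => ((X i : ℝ) : ℂ))
      map_add' := fun A B => Matrix.add_mulVec A B _
      map_smul' := fun c M => Matrix.smul_mulVec c M _ }
  let φC : Matrix (Fin n ⊕ Fin n) (Fin n ⊕ Fin n) ℂ →L[ℂ] (Fin n ⊕ Fin n → ℂ) :=
    ⟨LC, LC.continuous_of_finiteDimensional⟩
  let Cm : (Fin n ⊕ Fin n → ℝ) →ₗ[ℝ] (Fin n ⊕ Fin n → ℂ) :=
    { toFun := fun v => fun i => ((v i : ℝ) : ℂ)
      map_add' := fun a b => by funext i; simp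
      map_smul' := fun c a => by funext i; simp [Complex.ofReal_mul, Complex.real_smul] }
  let ψ : (Fin n ⊕ Fin n → ℝ) →L[ℝ] (Fin n ⊕ Fin n → ℂ) :=
    ⟨Cm, Cm.continuous_of_finiteDimensional⟩
  -- summability
  have hsumR : Summable (fun k : ℕ => ((k.factorial : ℝ))⁻¹ • ((2 * t) • ImF) ^ k) :=
    NormedSpace.expSeries_summable' (𝕂 := ℝ) ((2 * t) • ImF)
  have hsumC : Summable (fun k : ℕ =>
      ((k.factorial : ℂ))⁻¹ • (((-2 : ℂ) * Complex.I * (t : ℂ)) • F) ^ k) :=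
    NormedSpace.expSeries_summable' (𝕂 := ℂ) _
  -- real terms
  have hconvR : ∀ k : ℕ, (((k.factorial : ℝ))⁻¹ • ((2 * t) • ImF) ^ k) *ᵥ X
      = ((2 * t) ^ k / (k.factorial : ℝ)) • (ImF ^ k) *ᵥ X := by
    intro k
    rw [smul_pow, Matrix.smul_mulVec, Matrix.smul_mulVec, smul_smul,
      inv_mul_eq_div]
  have h2 : (NormedSpace.exp ((2 * t) • ImF)) *ᵥ X
      = ∑' k : ℕ, ((2 * t) ^ k / (k.factorial : ℝ)) • (ImF ^ k) *ᵥ X := by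
    have := φR.map_tsum hsumR
    rw [NormedSpace.exp_eq_tsum ℝ]
    refine this.trans (tsum_congr fun k => ?_)
    exact hconvR k
  refine ⟨?_, h2⟩
  -- complex side
  have hsum2 : Summable (fun k : ℕ => ((2 * t) ^ k / (k.factorial : ℝ)) • (ImF ^ k) *ᵥ X) := by
    have := hsumR.map φR φR.continuous
    refine this.congr fun k => ?_
    exact hconvR k
  have hC : (NormedSpace.exp (((-2 : ℂ) * Complex.I * (t : ℂ)) • F))
        *ᵥ (fun i => ((X i : ℝ) : ℂ))
      = ∑' k : ℕ, ((((2 * t) ^ k / (k.factorial : ℝ)) : ℝ) : ℂ)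
          • fun i => ((((ImF ^ k) *ᵥ X) i : ℝ) : ℂ) := by
    have h0 := φC.map_tsum hsumC
    rw [NormedSpace.exp_eq_tsum ℂ]
    refine h0.trans (tsum_congr fun k => ?_)
    show (((k.factorial : ℂ))⁻¹ • (((-2 : ℂ) * Complex.I * (t : ℂ)) • F) ^ k)
        *ᵥ (fun i => ((X i : ℝ) : ℂ)) = _
    rw [smul_pow, Matrix.smul_mulVec, Matrix.smul_mulVec, key k,
      smul_smul, smul_smul]
    congr 1
    have hI : ((-2 : ℂ) * Complex.I * (t : ℂ)) ^ k * Complex.I ^ k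
        = ((2 * t : ℝ) : ℂ) ^ k := by
      rw [← mul_pow]
      congr 1
      push_cast
      linear_combination (-2 * (t : ℂ)) * Complex.I_sq
    rw [mul_assoc, hI]
    push_cast
    ring
  refine hC.trans ?_
  have hψ : (fun i => (((NormedSpace.exp ((2 * t) • ImF)) *ᵥ X) i : ℂ))
      = ψ ((NormedSpace.exp ((2 * t) • ImF)) *ᵥ X) := rfl
  rw [hψ, h2, ψ.map_tsum hsum2]
  refine tsum_congr fun k => ?_
  show ((((2 * t) ^ k / (k.factorial : ℝ)) : ℝ) : ℂ) • (fun i => ((((ImF ^ k) *ᵥ X) i : ℝ) : ℂ))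
      = ψ (((2 * t) ^ k / (k.factorial : ℝ)) • (ImF ^ k) *ᵥ X)
  funext i
  simp [ψ, Cm, Complex.real_smul]
end
end

section
/- Let Q ∈ M_{2n×2n}(ℂ) be symmetric, let J = [[0, I],[−I, 0]] be the standard 2n×2n symplectic matrix, let F = JQ, and let S = (⋂_{j=0}^{2n−1} ker[(Re F)(Im F)^j]) ∩ ℝ^{2n} be the singular space, where Re F = (F + F̄)/2 and Im F = (F − F̄)/(2i). Then for every t ∈ ℝ, e^{−2itF}(S) = S; equivalently, e^{2t·Im F}(S) = S for all t ∈ ℝ. -/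
open Matrix

noncomputable section

namespace Stmt16Aux

variable {m : Type*} [Fintype m] [DecidableEq m]

/-- `mulVec` by a fixed vector, as a linear map in the matrix. -/
def mulVecRightLM (R : Type*) [CommRing R] (X : m → R) : Matrix m m R →ₗ[R] (m → R) where
  toFun M := M.mulVec X
  map_add' M N := Matrix.add_mulVec M N X
  map_smul' c M := Matrix.smul_mulVec c M X

/-- Coercion of real vectors to complex vectors, as an `ℝ`-linear map. -/
def coePiLM : (m → ℝ) →ₗ[ℝ] (m → ℂ) where
  toFun Y := fun i => (Y i : ℂ)
  map_add' Y Z := by funext i; simp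
  map_smul' r Y := by funext i; simp [Complex.real_smul]

lemma pow_card_eq_sum {K : Type*} [Field K] (hd : 0 < Fintype.card m) (B : Matrix m m K) :
    ∃ c : ℕ → K, B ^ (Fintype.card m)
      = ∑ i ∈ Finset.range (Fintype.card m), c i • B ^ i := by
  set d := Fintype.card m with hdd
  have hmonic : B.charpoly.Monic := B.charpoly_monic
  have hdeg : B.charpoly.natDegree = d := B.charpoly_natDegree_eq_dim
  have haev : Polynomial.aeval B B.charpoly = 0 := B.aeval_self_charpoly
  set q : Polynomial K := Polynomial.X ^ d - B.charpoly with hq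
  have hqd : q.natDegree < d := by
    by_cases h0 : q = 0
    · simpa [h0] using hd
    · rw [Polynomial.natDegree_lt_iff_degree_lt h0]
      have h1 : (Polynomial.X ^ d : Polynomial K).degree = B.charpoly.degree := by
        rw [Polynomial.degree_X_pow, Polynomial.degree_eq_natDegree hmonic.ne_zero, hdeg]
      have h2 := Polynomial.degree_sub_lt h1 ((Polynomial.monic_X_pow d).ne_zero) (by
        simp [Polynomial.leadingCoeff_X_pow, hmonic.leadingCoeff])
      simpa [hq, Polynomial.degree_X_pow] using h2
  refine ⟨fun i => q.coeff i, ?_⟩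
  have h2 : Polynomial.aeval B q = B ^ d - 0 := by
    rw [hq, map_sub, haev, Polynomial.aeval_X_pow]
  rw [sub_zero] at h2
  rw [← h2, Polynomial.aeval_eq_sum_range' hqd]

lemma allj {K : Type*} [Field K] {A B : Matrix m m K} {X : m → K} (hd : 0 < Fintype.card m)
    (h : ∀ j < Fintype.card m, (A * B ^ j).mulVec X = 0) :
    ∀ j, (A * B ^ j).mulVec X = 0 := by
  obtain ⟨c, hc⟩ := pow_card_eq_sum hd B
  intro j
  induction j using Nat.strong_induction_on with
  | _ j ih =>
    rcases lt_or_ge j (Fintype.card m) with hj | hj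
    · exact h j hj
    · set d := Fintype.card m with hdd
      have hsplit : A * B ^ j = ∑ i ∈ Finset.range d, c i • (A * B ^ (i + (j - d))) := by
        have hB : B ^ j = (B ^ d) * B ^ (j - d) := by rw [← pow_add]; congr 1; omega
        rw [hB, hc, Finset.sum_mul, Matrix.mul_sum]
        refine Finset.sum_congr rfl fun i hi => ?_
        rw [smul_mul_assoc, mul_smul_comm, ← pow_add]
      show (mulVecRightLM K X) (A * B ^ j) = 0
      rw [hsplit, map_sum]
      refine Finset.sum_eq_zero fun i hi => ?_
      rw [_root_.map_smul]
      have hlt : i + (j - d) < j := by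
        have := Finset.mem_range.mp hi; omega
      show c i • (A * B ^ (i + (j - d))).mulVec X = 0
      rw [ih _ hlt, smul_zero]

lemma exp_inv_real {A B : Matrix m m ℝ} {X : m → ℝ}
    (hall : ∀ j, (A * B ^ j).mulVec X = 0) (s : ℝ) (j : ℕ) :
    (A * B ^ j).mulVec ((NormedSpace.exp (s • B)).mulVec X) = 0 := by
  letI : SeminormedRing (Matrix m m ℝ) := Matrix.linftyOpSemiNormedRing
  letI : NormedRing (Matrix m m ℝ) := Matrix.linftyOpNormedRing
  letI : NormedAlgebra ℝ (Matrix m m ℝ) := Matrix.linftyOpNormedAlgebra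
  set ℓ : Matrix m m ℝ →L[ℝ] (m → ℝ) :=
    LinearMap.toContinuousLinearMap
      ((mulVecRightLM ℝ X).comp (LinearMap.mulLeft ℝ (A * B ^ j))) with hℓ
  have hl : ∀ M : Matrix m m ℝ, ℓ M = (A * B ^ j * M).mulVec X := fun M => rfl
  have hsum : Summable (fun k : ℕ => ((Nat.factorial k : ℝ))⁻¹ • (s • B) ^ k) :=
    NormedSpace.expSeries_summable' (𝕂 := ℝ) (s • B)
  have h1 : (A * B ^ j).mulVec ((NormedSpace.exp (s • B)).mulVec X)
      = ℓ (NormedSpace.exp (s • B)) := by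
    rw [hl, Matrix.mulVec_mulVec]
  rw [h1]
  simp only [NormedSpace.exp_eq_tsum ℝ]
  rw [ℓ.map_tsum hsum]
  convert tsum_zero with k
  have hpow : A * B ^ j * B ^ k = A * B ^ (j + k) := by rw [mul_assoc, ← pow_add]
  rw [_root_.map_smul, smul_pow, _root_.map_smul, hl, hpow, hall, smul_zero, smul_zero]

lemma map_ofReal_mulVec (M : Matrix m m ℝ) (Y : m → ℝ) :
    (M.map (Complex.ofReal)).mulVec (fun i => (Y i : ℂ)) = fun i => ((M.mulVec Y) i : ℂ) := by
  funext i
  simp only [Matrix.mulVec, dotProduct, Matrix.map_apply]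
  push_cast
  rfl

lemma Fpow_mulVec {F : Matrix m m ℂ} {X : m → ℝ}
    (hall : ∀ j, ((F.map Complex.re) * (F.map Complex.im) ^ j).mulVec X = 0) (k : ℕ) :
    (F ^ k).mulVec (fun i => (X i : ℂ))
      = Complex.I ^ k • fun i => ((((F.map Complex.im) ^ k).mulVec X) i : ℂ) := by
  induction k with
  | zero => simp [Matrix.one_mulVec]
  | succ k ih =>
    have hAv : (F.map Complex.re).mulVec (((F.map Complex.im) ^ k).mulVec X) = 0 := by
      rw [Matrix.mulVec_mulVec]; exact hall k
    have hdecomp : F = ((F.map Complex.re).map (Complex.ofReal))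
        + Complex.I • ((F.map Complex.im).map (Complex.ofReal)) := by
      ext i j
      simp only [Matrix.add_apply, Matrix.smul_apply, Matrix.map_apply, smul_eq_mul]
      rw [mul_comm]
      exact (Complex.re_add_im _).symm
    have key : ∀ Y : m → ℝ, (F.map Complex.re).mulVec Y = 0 →
        F.mulVec (fun i => (Y i : ℂ))
          = Complex.I • fun i => (((F.map Complex.im).mulVec Y) i : ℂ) := by
      intro Y hY
      conv_lhs => rw [hdecomp]
      rw [Matrix.add_mulVec, Matrix.smul_mulVec, map_ofReal_mulVec, map_ofReal_mulVec, hY]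
      funext i
      simp
    rw [pow_succ', ← Matrix.mulVec_mulVec, ih, Matrix.mulVec_smul, key _ hAv,
      Matrix.mulVec_mulVec, ← pow_succ', smul_smul, ← pow_succ]

lemma key_complex {F : Matrix m m ℂ} {X : m → ℝ}
    (hall : ∀ j, ((F.map Complex.re) * (F.map Complex.im) ^ j).mulVec X = 0) (t : ℝ) :
    (NormedSpace.exp (((-2 : ℂ) * Complex.I * (t : ℂ)) • F)).mulVec (fun i => (X i : ℂ))
      = fun i => (((NormedSpace.exp ((2 * t) • (F.map Complex.im))).mulVec X) i : ℂ) := by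
  letI : SeminormedRing (Matrix m m ℝ) := Matrix.linftyOpSemiNormedRing
  letI : NormedRing (Matrix m m ℝ) := Matrix.linftyOpNormedRing
  letI : NormedAlgebra ℝ (Matrix m m ℝ) := Matrix.linftyOpNormedAlgebra
  letI : SeminormedRing (Matrix m m ℂ) := Matrix.linftyOpSemiNormedRing
  letI : NormedRing (Matrix m m ℂ) := Matrix.linftyOpNormedRing
  letI : NormedAlgebra ℂ (Matrix m m ℂ) := Matrix.linftyOpNormedAlgebra
  set c : ℂ := (-2 : ℂ) * Complex.I * (t : ℂ) with hc
  set B : Matrix m m ℝ := F.map Complex.im with hB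
  have hcI : c * Complex.I = ((2 * t : ℝ) : ℂ) := by
    have h9 : c * Complex.I = -2 * (t : ℂ) * (Complex.I * Complex.I) := by rw [hc]; ring
    rw [h9, Complex.I_mul_I]
    push_cast
    ring
  set ψ : Matrix m m ℂ →L[ℂ] (m → ℂ) :=
    LinearMap.toContinuousLinearMap (mulVecRightLM ℂ (fun i => (X i : ℂ))) with hψ
  set χ : Matrix m m ℝ →L[ℝ] (m → ℂ) :=
    LinearMap.toContinuousLinearMap (coePiLM.comp (mulVecRightLM ℝ X)) with hχ
  have hψa : ∀ M : Matrix m m ℂ, ψ M = M.mulVec (fun i => (X i : ℂ)) := fun M => rfl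
  have hχa : ∀ M : Matrix m m ℝ, χ M = fun i => ((M.mulVec X) i : ℂ) := fun M => rfl
  have hsC : Summable (fun k : ℕ => ((Nat.factorial k : ℂ))⁻¹ • (c • F) ^ k) :=
    NormedSpace.expSeries_summable' (𝕂 := ℂ) (c • F)
  have hsR : Summable (fun k : ℕ => ((Nat.factorial k : ℝ))⁻¹ • ((2 * t) • B) ^ k) :=
    NormedSpace.expSeries_summable' (𝕂 := ℝ) ((2 * t) • B)
  have hL : (NormedSpace.exp (c • F)).mulVec (fun i => (X i : ℂ))
      = ψ (NormedSpace.exp (c • F)) := (hψa _).symm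
  have hR : (fun i => (((NormedSpace.exp ((2 * t) • B)).mulVec X) i : ℂ))
      = χ (NormedSpace.exp ((2 * t) • B)) := (hχa _).symm
  rw [hL, hR]
  simp only [NormedSpace.exp_eq_tsum ℂ, NormedSpace.exp_eq_tsum ℝ]
  rw [ψ.map_tsum hsC, χ.map_tsum hsR]
  refine tsum_congr fun k => ?_
  rw [_root_.map_smul, _root_.map_smul, smul_pow, smul_pow, _root_.map_smul, _root_.map_smul, hψa, hχa,
    Fpow_mulVec hall k]
  funext i
  simp only [Pi.smul_apply, smul_eq_mul, Complex.real_smul]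
  push_cast
  rw [show (c ^ k * (Complex.I ^ k * ((B ^ k).mulVec X i : ℂ))) =
        (c * Complex.I) ^ k * ((B ^ k).mulVec X i : ℂ) by ring, hcI]
  push_cast
  ring

end Stmt16Aux

open Stmt16Aux in
/-- Let `Q` be a symmetric complex `2n×2n` matrix, `J` the standard
symplectic matrix, `F = JQ`, and `S = (⋂_{j=0}^{2n−1} ker[(Re F)(Im F)^j]) ∩ ℝ^{2n}` the
singular space.  Then for every `t ∈ ℝ`, `e^{−2itF}(S) = S` (as a subset of `ℂ^{2n}`);
equivalently `e^{2t·Im F}(S) = S`. -/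
theorem stmt_16 (n : ℕ) (hn : 1 ≤ n)
    (Q : Matrix (Fin n ⊕ Fin n) (Fin n ⊕ Fin n) ℂ) (hQ : Qᵀ = Q)
    (J : Matrix (Fin n ⊕ Fin n) (Fin n ⊕ Fin n) ℂ)
    (hJ : J = Matrix.fromBlocks 0 1 (-1) 0)
    (F : Matrix (Fin n ⊕ Fin n) (Fin n ⊕ Fin n) ℂ) (hF : F = J * Q)
    (S : Set (Fin n ⊕ Fin n → ℝ))
    (hS : S = {X : Fin n ⊕ Fin n → ℝ | ∀ j : ℕ, j ≤ 2 * n - 1 →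
        (F.map Complex.re).mulVec (((F.map Complex.im) ^ j).mulVec X) = 0})
    (t : ℝ) :
    ((fun X : Fin n ⊕ Fin n → ℂ =>
          (NormedSpace.exp (((-2 : ℂ) * Complex.I * (t : ℂ)) • F)).mulVec X) ''
        ((fun X : Fin n ⊕ Fin n → ℝ => fun i => (X i : ℂ)) '' S)
      = (fun X : Fin n ⊕ Fin n → ℝ => fun i => (X i : ℂ)) '' S) ∧
    ((fun X : Fin n ⊕ Fin n → ℝ =>
          (NormedSpace.exp ((2 * t) • (F.map Complex.im))).mulVec X) '' S = S) := by
  set A : Matrix (Fin n ⊕ Fin n) (Fin n ⊕ Fin n) ℝ := F.map Complex.re with hA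
  set B : Matrix (Fin n ⊕ Fin n) (Fin n ⊕ Fin n) ℝ := F.map Complex.im with hB
  have hcard : Fintype.card (Fin n ⊕ Fin n) = 2 * n := by
    simp [Fintype.card_sum]; omega
  have hdpos : 0 < Fintype.card (Fin n ⊕ Fin n) := by omega
  -- membership characterization
  have hmem : ∀ X : Fin n ⊕ Fin n → ℝ, X ∈ S ↔ ∀ j, (A * B ^ j).mulVec X = 0 := by
    intro X
    constructor
    · intro hX
      refine allj hdpos fun j hj => ?_
      rw [← Matrix.mulVec_mulVec]
      exact (hS ▸ hX) j (by omega)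
    · intro h
      rw [hS]
      intro j hj
      rw [Matrix.mulVec_mulVec]
      exact h j
  have hfwd : ∀ s : ℝ, ∀ X ∈ S, (NormedSpace.exp (s • B)).mulVec X ∈ S := by
    intro s X hX
    rw [hmem]
    exact fun j => exp_inv_real ((hmem X).mp hX) s j
  have hinv : NormedSpace.exp ((2 * t) • B) * NormedSpace.exp ((-(2 * t)) • B) = 1 := by
    rw [← Matrix.exp_add_of_commute _ _ (((Commute.refl B).smul_left _).smul_right _)]
    rw [show (2 * t) • B + (-(2 * t)) • B = 0 by rw [← add_smul]; simp]
    exact NormedSpace.exp_zero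
  have part2 : ((fun X : Fin n ⊕ Fin n → ℝ =>
      (NormedSpace.exp ((2 * t) • B)).mulVec X) '' S = S) := by
    apply Set.Subset.antisymm
    · rintro _ ⟨X, hX, rfl⟩
      exact hfwd (2 * t) X hX
    · intro Y hY
      refine ⟨(NormedSpace.exp ((-(2 * t)) • B)).mulVec Y, hfwd _ Y hY, ?_⟩
      show (NormedSpace.exp ((2 * t) • B)).mulVec
        ((NormedSpace.exp ((-(2 * t)) • B)).mulVec Y) = Y
      rw [Matrix.mulVec_mulVec, hinv, Matrix.one_mulVec]
  refine ⟨?_, part2⟩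
  apply Set.Subset.antisymm
  · rintro _ ⟨_, ⟨X, hX, rfl⟩, rfl⟩
    exact ⟨(NormedSpace.exp ((2 * t) • B)).mulVec X, hfwd (2 * t) X hX,
      (key_complex ((hmem X).mp hX) t).symm⟩
  · rintro _ ⟨Y, hY, rfl⟩
    set Z := (NormedSpace.exp ((-(2 * t)) • B)).mulVec Y with hZ
    have hZS : Z ∈ S := hfwd _ Y hY
    refine ⟨fun i => (Z i : ℂ), ⟨Z, hZS, rfl⟩, ?_⟩
    show (NormedSpace.exp (((-2 : ℂ) * Complex.I * (t : ℂ)) • F)).mulVec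
        (fun i => (Z i : ℂ)) = fun i => (Y i : ℂ)
    rw [key_complex ((hmem Z).mp hZS) t]
    funext i
    rw [hZ, Matrix.mulVec_mulVec, hinv, Matrix.one_mulVec]
end
end

section
/- Let Q ∈ M_{2n×2n}(ℂ) be symmetric with positive semidefinite real part, let J = [[0, I],[−I, 0]] be the standard 2n×2n symplectic matrix, let F = JQ, and let S = (⋂_{j=0}^{2n−1} ker[(Re F)(Im F)^j]) ∩ ℝ^{2n} be the singular space. Then for every t > 0, S = ⋂_{0 ≤ s ≤ t} ker(Im(e^{2isF})) ∩ ℝ^{2n} = ⋂_{s ∈ ℝ} ker(Im(e^{2isF})) ∩ ℝ^{2n}; that is, a vector X ∈ ℝ^{2n} belongs to S if and only if Im(e^{2isF} X) = 0 for all s in [0, t] (equivalently, for all s ∈ ℝ). -/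
open Matrix

noncomputable section

open scoped Nat

attribute [local instance] Matrix.linftyOpNormedRing Matrix.linftyOpNormedAlgebra

namespace Stmt17Aux

variable {m : Type*} [Fintype m] [DecidableEq m]

/-- `mulVec` by a fixed vector, as a continuous linear map in the matrix argument. -/
def mulVecCLM (v : m → ℂ) : Matrix m m ℂ →L[ℂ] (m → ℂ) :=
  LinearMap.toContinuousLinearMap
    { toFun := fun M => M *ᵥ v
      map_add' := fun M N => Matrix.add_mulVec M N v
      map_smul' := fun c M => Matrix.smul_mulVec c M v }

@[simp] theorem mulVecCLM_apply (v : m → ℂ) (M : Matrix m m ℂ) :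
    mulVecCLM v M = M *ᵥ v := rfl

theorem summable_exp_series (M : Matrix m m ℂ) (v : m → ℂ) (z : ℂ) :
    Summable fun k : ℕ => ((k ! : ℂ)⁻¹ * z ^ k) • (M ^ k *ᵥ v) := by
  have hsum := NormedSpace.expSeries_summable' (𝕂 := ℂ) (z • M)
  have h2 : Summable fun k : ℕ => mulVecCLM v ((k ! : ℂ)⁻¹ • (z • M) ^ k) :=
    hsum.map (mulVecCLM v).toLinearMap.toAddMonoidHom (mulVecCLM v).continuous
  refine h2.congr fun k => ?_
  rw [mulVecCLM_apply, smul_pow, smul_smul, Matrix.smul_mulVec]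

theorem exp_mulVec_eq_tsum (M : Matrix m m ℂ) (v : m → ℂ) (z : ℂ) :
    (NormedSpace.exp (z • M)) *ᵥ v = ∑' k : ℕ, ((k ! : ℂ)⁻¹ * z ^ k) • (M ^ k *ᵥ v) := by
  have hsum := NormedSpace.expSeries_summable' (𝕂 := ℂ) (z • M)
  have h1 : (NormedSpace.exp (z • M)) *ᵥ v = mulVecCLM v (NormedSpace.exp (z • M)) := rfl
  rw [h1, NormedSpace.exp_eq_tsum ℂ, (mulVecCLM v).map_tsum hsum]
  refine tsum_congr fun k => ?_
  rw [mulVecCLM_apply, smul_pow, smul_smul, Matrix.smul_mulVec]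

theorem hasDerivAt_exp_mulVec (M : Matrix m m ℂ) (w : m → ℂ) (z : ℂ) :
    HasDerivAt (fun u : ℂ => NormedSpace.exp (u • M) *ᵥ w)
      (NormedSpace.exp (z • M) *ᵥ (M *ᵥ w)) z := by
  have h := hasDerivAt_exp_smul_const (𝕂 := ℂ) M z
  have h2 := (mulVecCLM w).hasFDerivAt.comp_hasDerivAt z h
  rw [Matrix.mulVec_mulVec]
  exact h2

theorem hasDerivAt_im_exp_mulVec (M : Matrix m m ℂ) (w : m → ℂ) (i : m) (s : ℝ) :
    HasDerivAt (fun s : ℝ => ((NormedSpace.exp ((s : ℂ) • M) *ᵥ w) i).im)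
      ((NormedSpace.exp ((s : ℂ) • M) *ᵥ (M *ᵥ w)) i).im s := by
  have h1 : HasDerivAt (fun z : ℂ => (NormedSpace.exp (z • M) *ᵥ w) i)
      ((NormedSpace.exp ((s : ℂ) • M) *ᵥ (M *ᵥ w)) i) (s : ℂ) := by
    have hproj := (ContinuousLinearMap.proj i :
        (m → ℂ) →L[ℂ] ℂ).hasFDerivAt.comp_hasDerivAt (s : ℂ) (hasDerivAt_exp_mulVec M w (s : ℂ))
    exact hproj
  have h2 := h1.comp_ofReal
  exact Complex.imCLM.hasFDerivAt.comp_hasDerivAt s h2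

theorem continuous_im_exp_mulVec (M : Matrix m m ℂ) (w : m → ℂ) (i : m) :
    Continuous fun s : ℝ => ((NormedSpace.exp ((s : ℂ) • M) *ᵥ w) i).im :=
  continuous_iff_continuousAt.2 fun s => (hasDerivAt_im_exp_mulVec M w i s).continuousAt

/-- Decomposition of a complex matrix acting on a real vector. -/
theorem mulVec_real_decomp (G : Matrix m m ℂ) (w : m → ℝ) :
    G *ᵥ (fun j => (w j : ℂ)) =
      (fun j => (((G.map Complex.re *ᵥ w) j : ℝ) : ℂ)) +
        Complex.I • fun j => (((G.map Complex.im *ᵥ w) j : ℝ) : ℂ) := by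
  funext i
  simp only [Matrix.mulVec, dotProduct, Pi.add_apply, Pi.smul_apply, Matrix.map_apply,
    smul_eq_mul]
  push_cast
  rw [Finset.mul_sum, ← Finset.sum_add_distrib]
  refine Finset.sum_congr rfl fun j _ => ?_
  nth_rewrite 1 [← Complex.re_add_im (G i j)]
  ring

/-- Forward: on the singular space, powers of `F` act like powers of `i·Im F`. -/
theorem pow_mulVec_of_singular (F : Matrix m m ℂ) (Xv : m → ℝ)
    (h : ∀ k : ℕ, (F.map Complex.re) *ᵥ ((F.map Complex.im) ^ k *ᵥ Xv) = 0) :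
    ∀ k : ℕ, F ^ k *ᵥ (fun j => ((Xv j : ℝ) : ℂ)) =
      Complex.I ^ k • fun j => ((((F.map Complex.im) ^ k *ᵥ Xv) j : ℝ) : ℂ) := by
  intro k
  induction k with
  | zero => simp [Matrix.one_mulVec]
  | succ k ih =>
    have h1 : F ^ (k + 1) *ᵥ (fun j => ((Xv j : ℝ) : ℂ)) =
        F *ᵥ (F ^ k *ᵥ fun j => ((Xv j : ℝ) : ℂ)) := by
      rw [Matrix.mulVec_mulVec, ← pow_succ']
    rw [h1, ih, Matrix.mulVec_smul, mulVec_real_decomp]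
    have h2 : (F.map Complex.re) *ᵥ ((F.map Complex.im) ^ k *ᵥ Xv) = 0 := h k
    have h3 : (F.map Complex.im) *ᵥ ((F.map Complex.im) ^ k *ᵥ Xv) =
        (F.map Complex.im) ^ (k + 1) *ᵥ Xv := by
      rw [Matrix.mulVec_mulVec, ← pow_succ']
    rw [h2, h3]
    funext j
    simp [pow_succ]
    ring

theorem im_helper (K : ℕ) (a b : ℝ) :
    (Complex.I ^ (K + 2) * (Complex.I ^ (K + 1) * ((a : ℂ) + Complex.I * (b : ℂ)))).im
      = (-1 : ℝ) ^ (K + 1) * a := by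
  have hI : Complex.I ^ (K + 2) * Complex.I ^ (K + 1)
      = (((-1 : ℝ) ^ (K + 1) : ℝ) : ℂ) * Complex.I := by
    rw [← pow_add]
    have h2 : K + 2 + (K + 1) = 2 * (K + 1) + 1 := by ring
    rw [h2, pow_succ, pow_mul, Complex.I_sq]
    push_cast
    ring
  rw [← mul_assoc, hI]
  have : ((((-1 : ℝ) ^ (K + 1) : ℝ) : ℂ) * Complex.I * ((a : ℂ) + Complex.I * (b : ℂ)))
      = Complex.ofReal ((-1 : ℝ) ^ (K + 1) * (-b))
        + Complex.ofReal ((-1 : ℝ) ^ (K + 1) * a) * Complex.I := by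
    push_cast
    ring_nf
    rw [Complex.I_sq]
    ring
  rw [this]
  simp only [Complex.add_im, Complex.ofReal_im, Complex.mul_im, Complex.ofReal_re,
    Complex.I_im, Complex.I_re, mul_one, mul_zero, add_zero, zero_add]

/-- Backward: if all the `Im(i^k F^k X)` vanish then `X` is in the singular space. -/
theorem singular_of_im (F : Matrix m m ℂ) (Xv : m → ℝ)
    (h : ∀ (k : ℕ) (i : m),
      (Complex.I ^ k * ((F ^ k *ᵥ fun j => ((Xv j : ℝ) : ℂ)) i)).im = 0) :
    ∀ k : ℕ, (F.map Complex.re) *ᵥ ((F.map Complex.im) ^ k *ᵥ Xv) = 0 := by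
  suffices H : ∀ k : ℕ, (F ^ k *ᵥ (fun j => ((Xv j : ℝ) : ℂ))
        = Complex.I ^ k • fun j => ((((F.map Complex.im) ^ k *ᵥ Xv) j : ℝ) : ℂ)) ∧
      (F.map Complex.re) *ᵥ ((F.map Complex.im) ^ k *ᵥ Xv) = 0 from fun k => (H k).2
  intro k
  induction k with
  | zero =>
    constructor
    · simp [Matrix.one_mulVec]
    · funext i
      have hk1 := h 1 i
      have e1 : F ^ 1 *ᵥ (fun j => ((Xv j : ℝ) : ℂ))
          = (fun j => ((((F.map Complex.re) *ᵥ Xv) j : ℝ) : ℂ)) +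
            Complex.I • fun j => ((((F.map Complex.im) *ᵥ Xv) j : ℝ) : ℂ) := by
        rw [pow_one]; exact mulVec_real_decomp F Xv
      rw [e1] at hk1
      simp only [pow_one, Pi.add_apply, Pi.smul_apply, smul_eq_mul] at hk1
      have him : (Complex.I * (((((F.map Complex.re *ᵥ Xv) i : ℝ)) : ℂ)
          + Complex.I * (((F.map Complex.im *ᵥ Xv) i : ℝ) : ℂ))).im
          = (F.map Complex.re *ᵥ Xv) i := by
        simp [Complex.add_im, Complex.mul_im]
      rw [him] at hk1
      simpa [Matrix.one_mulVec] using hk1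
  | succ k ih =>
    obtain ⟨ihf, ihA⟩ := ih
    have hBs : (F.map Complex.im) *ᵥ ((F.map Complex.im) ^ k *ᵥ Xv)
        = (F.map Complex.im) ^ (k + 1) *ᵥ Xv := by
      rw [Matrix.mulVec_mulVec, ← pow_succ']
    have hBs' : (F.map Complex.im) *ᵥ ((F.map Complex.im) ^ (k + 1) *ᵥ Xv)
        = (F.map Complex.im) ^ (k + 2) *ᵥ Xv := by
      rw [Matrix.mulVec_mulVec, ← pow_succ']
    have hf : F ^ (k + 1) *ᵥ (fun j => ((Xv j : ℝ) : ℂ)) =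
        Complex.I ^ (k + 1) • fun j => ((((F.map Complex.im) ^ (k + 1) *ᵥ Xv) j : ℝ) : ℂ) := by
      have h1 : F ^ (k + 1) *ᵥ (fun j => ((Xv j : ℝ) : ℂ))
          = F *ᵥ (F ^ k *ᵥ (fun j => ((Xv j : ℝ) : ℂ))) := by
        rw [Matrix.mulVec_mulVec, ← pow_succ']
      rw [h1, ihf, Matrix.mulVec_smul, mulVec_real_decomp, ihA, hBs]
      funext j
      simp [pow_succ]
      ring
    refine ⟨hf, ?_⟩
    funext i
    have hk2 := h (k + 2) i
    have h1 : F ^ (k + 2) *ᵥ (fun j => ((Xv j : ℝ) : ℂ))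
        = F *ᵥ (F ^ (k + 1) *ᵥ (fun j => ((Xv j : ℝ) : ℂ))) := by
      rw [Matrix.mulVec_mulVec, ← pow_succ']
    rw [h1, hf, Matrix.mulVec_smul, mulVec_real_decomp] at hk2
    simp only [Pi.add_apply, Pi.smul_apply, smul_eq_mul] at hk2
    rw [im_helper k ((F.map Complex.re *ᵥ (F.map Complex.im ^ (k + 1) *ᵥ Xv)) i)
      ((F.map Complex.im *ᵥ (F.map Complex.im ^ (k + 1) *ᵥ Xv)) i)] at hk2
    have hne : ((-1 : ℝ) ^ (k + 1)) ≠ 0 := by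
      simp
    have : (F.map Complex.re *ᵥ (F.map Complex.im ^ (k + 1) *ᵥ Xv)) i = 0 := by
      rcases mul_eq_zero.1 hk2 with h' | h'
      · exact absurd h' hne
      · exact h'
    simpa using this

/-- Cayley–Hamilton: vanishing for exponents below the dimension implies vanishing for all. -/
theorem all_powers_of_upto {N : ℕ} (hN : 0 < N) (hcard : Fintype.card m = N)
    (A B : Matrix m m ℝ) (X : m → ℝ)
    (h : ∀ j < N, A *ᵥ (B ^ j *ᵥ X) = 0) : ∀ j, A *ᵥ (B ^ j *ᵥ X) = 0 := by
  intro j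
  by_cases hj : j < N
  · exact h j hj
  have hmonic := B.charpoly_monic
  have hdeg : B.charpoly.natDegree = N := by
    rw [Matrix.charpoly_natDegree_eq_dim, hcard]
  have hq1 : B.charpoly ≠ 1 := by
    intro hh
    rw [hh, Polynomial.natDegree_one] at hdeg
    omega
  set r := Polynomial.X ^ j %ₘ B.charpoly with hr
  have hBj : B ^ j = Polynomial.aeval B r := by
    have hdiv := Polynomial.modByMonic_add_div (Polynomial.X ^ j) B.charpoly
    have h2 := congrArg (Polynomial.aeval B) hdiv
    rw [map_add, _root_.map_mul, Matrix.aeval_self_charpoly, zero_mul, add_zero,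
      Polynomial.aeval_X_pow] at h2
    exact h2.symm
  have hrd : r.natDegree < N := by
    have h3 := Polynomial.natDegree_modByMonic_lt (Polynomial.X ^ j) hmonic hq1
    rw [← hr] at h3
    omega
  rw [hBj, Polynomial.aeval_eq_sum_range' hrd]
  have hs : ∀ s : Finset ℕ, (∑ i ∈ s, r.coeff i • B ^ i) *ᵥ X
      = ∑ i ∈ s, r.coeff i • (B ^ i *ᵥ X) := by
    intro s
    induction s using Finset.induction with
    | empty => simp [Matrix.zero_mulVec]
    | insert _ _ hx ih =>
      rw [Finset.sum_insert hx, Finset.sum_insert hx, Matrix.add_mulVec, ih,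
        Matrix.smul_mulVec]
  rw [hs]
  have hAz : A *ᵥ (∑ i ∈ Finset.range N, r.coeff i • (B ^ i *ᵥ X)) = 0 := by
    have : A *ᵥ (∑ i ∈ Finset.range N, r.coeff i • (B ^ i *ᵥ X))
        = ∑ i ∈ Finset.range N, r.coeff i • (A *ᵥ (B ^ i *ᵥ X)) := by
      rw [← Matrix.mulVecLin_apply, map_sum]
      refine Finset.sum_congr rfl fun i _ => ?_
      rw [LinearMap.map_smul, Matrix.mulVecLin_apply]
    rw [this]
    refine Finset.sum_eq_zero fun i hi => ?_
    rw [h i (Finset.mem_range.1 hi), smul_zero]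
  exact hAz

end Stmt17Aux


/-- Let `Q` be a symmetric complex `2n×2n` matrix with positive
semidefinite real part, `J` the standard symplectic matrix, `F = JQ`, and
`S = (⋂_{j=0}^{2n−1} ker[(Re F)(Im F)^j]) ∩ ℝ^{2n}` the singular space.  Then for every
`t > 0` and `X ∈ ℝ^{2n}`:  `X ∈ S` iff `Im(e^{2isF} X) = 0` for all `s ∈ [0,t]`, and
`X ∈ S` iff `Im(e^{2isF} X) = 0` for all `s ∈ ℝ`. -/
theorem stmt_17 (n : ℕ) (hn : 1 ≤ n)
    (Q : Matrix (Fin n ⊕ Fin n) (Fin n ⊕ Fin n) ℂ) (hQ : Qᵀ = Q)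
    (hReQ : ∀ X : Fin n ⊕ Fin n → ℝ, 0 ≤ (Q.map Complex.re).mulVec X ⬝ᵥ X)
    (J : Matrix (Fin n ⊕ Fin n) (Fin n ⊕ Fin n) ℂ)
    (hJ : J = Matrix.fromBlocks 0 1 (-1) 0)
    (F : Matrix (Fin n ⊕ Fin n) (Fin n ⊕ Fin n) ℂ) (hF : F = J * Q)
    (S : Set (Fin n ⊕ Fin n → ℝ))
    (hS : S = {X : Fin n ⊕ Fin n → ℝ | ∀ j : ℕ, j ≤ 2 * n - 1 →
        (F.map Complex.re).mulVec (((F.map Complex.im) ^ j).mulVec X) = 0})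
    (t : ℝ) (ht : 0 < t) (X : Fin n ⊕ Fin n → ℝ) :
    (X ∈ S ↔ ∀ s ∈ Set.Icc (0 : ℝ) t, ∀ i : Fin n ⊕ Fin n,
        ((NormedSpace.exp (((2 : ℂ) * Complex.I * (s : ℂ)) • F)).mulVec
            (fun i => (X i : ℂ)) i).im = 0) ∧
    (X ∈ S ↔ ∀ s : ℝ, ∀ i : Fin n ⊕ Fin n,
        ((NormedSpace.exp (((2 : ℂ) * Complex.I * (s : ℂ)) • F)).mulVec
            (fun i => (X i : ℂ)) i).im = 0) := by
  classical
  set M : Matrix (Fin n ⊕ Fin n) (Fin n ⊕ Fin n) ℂ := ((2 : ℂ) * Complex.I) • F with hM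
  have hexp_arg : ∀ s : ℝ, ((2 : ℂ) * Complex.I * (s : ℂ)) • F = (s : ℂ) • M := by
    intro s
    rw [hM, smul_smul]
    congr 1
    ring
  have hcard : Fintype.card (Fin n ⊕ Fin n) = 2 * n := by
    simp only [Fintype.card_sum, Fintype.card_fin]
    omega
  have hIk : ∀ k : ℕ, ((2 : ℂ) * Complex.I) ^ k * Complex.I ^ k = (((-2 : ℝ) ^ k : ℝ) : ℂ) := by
    intro k
    rw [mul_pow, mul_assoc, ← pow_add, ← two_mul, pow_mul, Complex.I_sq]
    push_cast
    rw [← mul_pow]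
    norm_num
  -- forward direction
  have fwd : X ∈ S → ∀ s : ℝ, ∀ i : Fin n ⊕ Fin n,
      ((NormedSpace.exp (((2 : ℂ) * Complex.I * (s : ℂ)) • F)).mulVec
        (fun i => (X i : ℂ)) i).im = 0 := by
    intro hX s i
    rw [hS] at hX
    have hmem : ∀ j < 2 * n, (F.map Complex.re) *ᵥ ((F.map Complex.im) ^ j *ᵥ X) = 0 :=
      fun j hj => hX j (by omega)
    have hall := Stmt17Aux.all_powers_of_upto (by omega) hcard
      (F.map Complex.re) (F.map Complex.im) X hmem
    have hpow := Stmt17Aux.pow_mulVec_of_singular F X hall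
    rw [hexp_arg s]
    have hts := Stmt17Aux.exp_mulVec_eq_tsum M (fun i => ((X i : ℝ) : ℂ)) ((s : ℝ) : ℂ)
    have hsumm := Stmt17Aux.summable_exp_series M (fun i => ((X i : ℝ) : ℂ)) ((s : ℝ) : ℂ)
    have h5 := congrFun hts i
    show ((NormedSpace.exp (((s : ℝ) : ℂ) • M) *ᵥ fun i => ((X i : ℝ) : ℂ)) i).im = 0
    rw [h5, tsum_apply hsumm]
    have hsumm_i : Summable fun k : ℕ =>
        ((((k ! : ℂ))⁻¹ * ((s : ℝ) : ℂ) ^ k) • (M ^ k *ᵥ fun i => ((X i : ℝ) : ℂ))) i := by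
      have := hsumm.map (Pi.evalAddMonoidHom (fun _ : Fin n ⊕ Fin n => ℂ) i)
        (continuous_apply i)
      exact this
    have h6 : (∑' k : ℕ,
        ((((k ! : ℂ))⁻¹ * ((s : ℝ) : ℂ) ^ k) • (M ^ k *ᵥ fun i => ((X i : ℝ) : ℂ))) i).im
        = ∑' k : ℕ,
          (((((k ! : ℂ))⁻¹ * ((s : ℝ) : ℂ) ^ k) • (M ^ k *ᵥ fun i => ((X i : ℝ) : ℂ))) i).im := by
      have := ContinuousLinearMap.map_tsum Complex.imCLM hsumm_i
      simpa using this
    rw [h6]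
    have h7 : ∀ k : ℕ,
        (((((k ! : ℂ))⁻¹ * ((s : ℝ) : ℂ) ^ k) • (M ^ k *ᵥ fun i => ((X i : ℝ) : ℂ))) i).im = 0 := by
      intro k
      have hMk : (M ^ k *ᵥ fun i => ((X i : ℝ) : ℂ)) i
          = (((2 : ℂ) * Complex.I) ^ k * Complex.I ^ k) *
            ((((F.map Complex.im) ^ k *ᵥ X) i : ℝ) : ℂ) := by
        rw [hM, smul_pow, Matrix.smul_mulVec, hpow k, smul_smul]
        simp
      simp only [Pi.smul_apply, smul_eq_mul, hMk, hIk k]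
      have : ((k ! : ℂ))⁻¹ * ((s : ℝ) : ℂ) ^ k *
            ((((-2 : ℝ) ^ k : ℝ) : ℂ) * ((((F.map Complex.im) ^ k *ᵥ X) i : ℝ) : ℂ))
          = ((((k ! : ℝ))⁻¹ * s ^ k * ((-2 : ℝ) ^ k * ((F.map Complex.im) ^ k *ᵥ X) i) : ℝ) : ℂ) := by
        push_cast
        ring
      rw [this]
      exact Complex.ofReal_im _
    rw [tsum_congr h7, tsum_zero]
  -- backward direction
  have bwd : (∀ s ∈ Set.Icc (0 : ℝ) t, ∀ i : Fin n ⊕ Fin n,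
      ((NormedSpace.exp (((2 : ℂ) * Complex.I * (s : ℂ)) • F)).mulVec
        (fun i => (X i : ℂ)) i).im = 0) → X ∈ S := by
    intro hcond
    have P : ∀ k : ℕ, ∀ s ∈ Set.Icc (0 : ℝ) t, ∀ i : Fin n ⊕ Fin n,
        ((NormedSpace.exp (((s : ℝ) : ℂ) • M) *ᵥ (M ^ k *ᵥ fun i => ((X i : ℝ) : ℂ))) i).im
          = 0 := by
      intro k
      induction k with
      | zero =>
        intro s hs i
        have h0 := hcond s hs i
        rw [hexp_arg s] at h0
        simpa [Matrix.one_mulVec] using h0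
      | succ k ih =>
        have hIoo : ∀ i : Fin n ⊕ Fin n, ∀ s' ∈ Set.Ioo (0 : ℝ) t,
            ((NormedSpace.exp (((s' : ℝ) : ℂ) • M) *ᵥ
              (M ^ (k + 1) *ᵥ fun i => ((X i : ℝ) : ℂ))) i).im = 0 := by
          intro i s' hs'
          have hder := Stmt17Aux.hasDerivAt_im_exp_mulVec M
            (M ^ k *ᵥ fun i => ((X i : ℝ) : ℂ)) i s'
          have hMM : M *ᵥ (M ^ k *ᵥ fun i => ((X i : ℝ) : ℂ))
              = M ^ (k + 1) *ᵥ fun i => ((X i : ℝ) : ℂ) := by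
            rw [Matrix.mulVec_mulVec, ← pow_succ']
          rw [hMM] at hder
          have hev : (fun s : ℝ => ((NormedSpace.exp (((s : ℝ) : ℂ) • M) *ᵥ
              (M ^ k *ᵥ fun i => ((X i : ℝ) : ℂ))) i).im) =ᶠ[nhds s'] fun _ => (0 : ℝ) := by
            filter_upwards [Ioo_mem_nhds hs'.1 hs'.2] with x hx
            exact ih x (Set.Ioo_subset_Icc_self hx) i
          have hd0 := hev.deriv_eq
          rw [deriv_const] at hd0
          rw [← hder.deriv]
          exact hd0
        intro s hs i
        have hcont := Stmt17Aux.continuous_im_exp_mulVec M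
          (M ^ (k + 1) *ᵥ fun i => ((X i : ℝ) : ℂ)) i
        have h1 : Set.EqOn (fun s : ℝ => ((NormedSpace.exp (((s : ℝ) : ℂ) • M) *ᵥ
            (M ^ (k + 1) *ᵥ fun i => ((X i : ℝ) : ℂ))) i).im) (fun _ => (0 : ℝ))
            (Set.Ioo 0 t) := fun x hx => hIoo i x hx
        have h2 := h1.closure hcont continuous_const
        rw [closure_Ioo ht.ne] at h2
        exact h2 hs
    have hP0 : ∀ (k : ℕ) (i : Fin n ⊕ Fin n),
        (Complex.I ^ k * ((F ^ k *ᵥ fun j => ((X j : ℝ) : ℂ)) i)).im = 0 := by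
      intro k i
      have h0 := P k 0 ⟨le_refl 0, le_of_lt ht⟩ i
      rw [show ((0 : ℝ) : ℂ) = 0 by norm_num, zero_smul, NormedSpace.exp_zero,
        Matrix.one_mulVec] at h0
      have hMk : (M ^ k *ᵥ fun j => ((X j : ℝ) : ℂ)) i
          = (((2 : ℝ) ^ k : ℝ) : ℂ) *
            (Complex.I ^ k * ((F ^ k *ᵥ fun j => ((X j : ℝ) : ℂ)) i)) := by
        rw [hM, smul_pow, Matrix.smul_mulVec]
        simp only [Pi.smul_apply, smul_eq_mul, mul_pow]
        push_cast
        ring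
      rw [hMk, Complex.mul_im, Complex.ofReal_re, Complex.ofReal_im, zero_mul, add_zero] at h0
      have h2pos : (0 : ℝ) < (2 : ℝ) ^ k := by positivity
      rcases mul_eq_zero.1 h0 with h' | h'
      · exact absurd h' h2pos.ne'
      · exact h'
    have hsing := Stmt17Aux.singular_of_im F X hP0
    rw [hS]
    intro j _
    exact hsing j
  exact ⟨⟨fun hX s _ i => fwd hX s i, bwd⟩,
    ⟨fun hX s i => fwd hX s i, fun h => bwd fun s _ i => h s i⟩⟩
end
end
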